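/- arXiv:1601.02527 — 5 statements merged into one kernel-verified Lean document; each statement's English description precedes it below -/
import Mathlib

section
/- Let (p_n)_{n≥1} ⊆ [1,∞) and (σ_n)_{n≥1} ⊆ (0,∞) with σ_n → ∞, and assume f(x̄) < ∞ for some x̄ ∈ ℝ, where f(x) := Σ_{n≥1} p_n e^{σ_n x}. Then there exists α ∈ [0,∞) such that I := (−∞,−α) ⊆ dom f ⊆ (−∞,0) ∩ cl I; f is strictly convex and strictly increasing on dom f; lim_{x→−∞} f(x) = 0 = inf f; f is differentiable at every x ∈ I with f'(x) = Σ_{n≥1} p_n σ_n e^{σ_n x}; f' is increasing and continuous on I with lim_{x→−∞} f'(x) = 0 and lim_{x↑−α} f'(x) = Σ_{n≥1} p_n σ_n e^{−σ_n α} =: γ ∈ (0,∞]; and f'(I) = (0,γ). -/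
open Filter
open scoped ENNReal Topology

/-- The real-valued sum `f(x) = Σ_{n} p_n e^{σ_n x}` (junk value when not summable). -/
noncomputable def fR (p σ : ℕ → ℝ) (x : ℝ) : ℝ := ∑' n, p n * Real.exp (σ n * x)

/-- The effective domain of `f`: the set of `x` where the series `Σ p_n e^{σ_n x}` converges. -/
def fDom (p σ : ℕ → ℝ) : Set ℝ := {x : ℝ | Summable fun n => p n * Real.exp (σ n * x)}

/-- The term-by-term derivative `f'(x) = Σ_n p_n σ_n e^{σ_n x}` (junk value when not summable). -/
noncomputable def fD (p σ : ℕ → ℝ) (x : ℝ) : ℝ := ∑' n, p n * σ n * Real.exp (σ n * x)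

/-- `γ := Σ_n p_n σ_n e^{−σ_n α} ∈ (0,+∞]`, as an extended real. -/
noncomputable def gammaE (p σ : ℕ → ℝ) (α : ℝ) : EReal :=
  ((∑' n, ENNReal.ofReal (p n * σ n * Real.exp (σ n * (-α))) : ℝ≥0∞) : EReal)

private lemma aux_deriv_summable (p σ : ℕ → ℝ) (hp : ∀ n, 1 ≤ p n) (hσpos : ∀ n, 0 < σ n)
    {t t' : ℝ} (htt : t < t') (ht' : Summable fun n => p n * Real.exp (σ n * t')) :
    Summable fun n => p n * σ n * Real.exp (σ n * t) := by
  have hδ : 0 < t' - t := by linarith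
  refine Summable.of_nonneg_of_le
    (fun n => by
      have := (hσpos n).le
      have := (hp n)
      positivity)
    (fun n => ?_) (ht'.mul_left (2 / (t' - t)))
  have hz : 0 < σ n := hσpos n
  have hE : (0:ℝ) < Real.exp (σ n * (t' - t)) := Real.exp_pos _
  have h1 : σ n * (t' - t) ≤ Real.exp (σ n * (t' - t)) := by
    have := Real.add_one_le_exp (σ n * (t' - t)); linarith
  have key : σ n ≤ 2 / (t' - t) * Real.exp (σ n * (t' - t)) := by
    rw [div_mul_eq_mul_div, le_div_iff₀ hδ]
    nlinarith
  have hp0 : (0:ℝ) < p n := lt_of_lt_of_le one_pos (hp n)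
  have he : (0:ℝ) < Real.exp (σ n * t) := Real.exp_pos _
  have h2 : Real.exp (σ n * t') = Real.exp (σ n * t) * Real.exp (σ n * (t' - t)) := by
    rw [← Real.exp_add]; ring_nf
  rw [h2]
  have := mul_le_mul_of_nonneg_right
    (mul_le_mul_of_nonneg_left key hp0.le) he.le
  refine le_trans this (le_of_eq (by ring))

/-- Properties of `f(x) = Σ p_n e^{σ_n x}` under the assumption `(A_{σf})`:
`(σ_n) ⊆ (0,∞)`, `σ_n → ∞`, and `dom f ≠ ∅`. -/
theorem stmt11 (p σ : ℕ → ℝ) (hp : ∀ n, 1 ≤ p n) (hσpos : ∀ n, 0 < σ n)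
    (hσtop : Tendsto σ atTop atTop)
    (xbar : ℝ) (hxbar : xbar ∈ fDom p σ) :
    ∃ α : ℝ, 0 ≤ α ∧
      Set.Iio (-α) ⊆ fDom p σ ∧
      fDom p σ ⊆ Set.Iio 0 ∩ closure (Set.Iio (-α)) ∧
      StrictConvexOn ℝ (fDom p σ) (fR p σ) ∧
      StrictMonoOn (fR p σ) (fDom p σ) ∧
      Tendsto (fR p σ) atBot (nhds 0) ∧
      sInf (fR p σ '' fDom p σ) = 0 ∧
      (∀ x ∈ Set.Iio (-α),
        (Summable fun n => p n * σ n * Real.exp (σ n * x)) ∧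
        HasDerivAt (fR p σ) (fD p σ x) x) ∧
      StrictMonoOn (fD p σ) (Set.Iio (-α)) ∧
      ContinuousOn (fD p σ) (Set.Iio (-α)) ∧
      Tendsto (fD p σ) atBot (nhds 0) ∧
      Tendsto (fun x => ((fD p σ x : ℝ) : EReal)) (nhdsWithin (-α) (Set.Iio (-α)))
        (nhds (gammaE p σ α)) ∧
      (0 : EReal) < gammaE p σ α ∧
      fD p σ '' Set.Iio (-α) = {y : ℝ | 0 < y ∧ ((y : ℝ) : EReal) < gammaE p σ α} := by
  have hp0 : ∀ n, (0:ℝ) < p n := fun n => lt_of_lt_of_le one_pos (hp n)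
  have hq : ∀ n (x : ℝ), 0 < p n * Real.exp (σ n * x) :=
    fun n x => mul_pos (hp0 n) (Real.exp_pos _)
  have hqd : ∀ n (x : ℝ), 0 < p n * σ n * Real.exp (σ n * x) :=
    fun n x => mul_pos (mul_pos (hp0 n) (hσpos n)) (Real.exp_pos _)
  have hqmono : ∀ n {x y : ℝ}, x ≤ y →
      p n * Real.exp (σ n * x) ≤ p n * Real.exp (σ n * y) := fun n x y hxy =>
    mul_le_mul_of_nonneg_left (Real.exp_le_exp.2 (mul_le_mul_of_nonneg_left hxy (hσpos n).le))
      (hp0 n).le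
  have hqdmono : ∀ n {x y : ℝ}, x ≤ y →
      p n * σ n * Real.exp (σ n * x) ≤ p n * σ n * Real.exp (σ n * y) := fun n x y hxy =>
    mul_le_mul_of_nonneg_left (Real.exp_le_exp.2 (mul_le_mul_of_nonneg_left hxy (hσpos n).le))
      (mul_pos (hp0 n) (hσpos n)).le
  -- the domain is a lower set
  have hdown : ∀ {x y : ℝ}, x ≤ y → y ∈ fDom p σ → x ∈ fDom p σ := by
    intro x y hxy hy
    exact Summable.of_nonneg_of_le (fun n => (hq n x).le) (fun n => hqmono n hxy) hy
  -- the domain is contained in (-∞, 0)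
  have hD0 : fDom p σ ⊆ Set.Iio 0 := by
    intro x hx
    by_contra h
    rw [Set.mem_Iio, not_lt] at h
    have hx' : Summable fun n => p n * Real.exp (σ n * x) := hx
    have h1 : ∀ n, (1:ℝ) ≤ p n * Real.exp (σ n * x) := by
      intro n
      have : (0:ℝ) ≤ σ n * x := mul_nonneg (hσpos n).le (by simpa using h)
      have he1 : (1:ℝ) ≤ Real.exp (σ n * x) := Real.one_le_exp this
      calc (1:ℝ) = 1 * 1 := by ring
        _ ≤ p n * Real.exp (σ n * x) := mul_le_mul (hp n) he1 zero_le_one (hp0 n).le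
    have := ge_of_tendsto' hx'.tendsto_atTop_zero h1
    linarith
  have hne : (fDom p σ).Nonempty := ⟨xbar, hxbar⟩
  have hbdd : BddAbove (fDom p σ) := ⟨0, fun x hx => (hD0 hx).le⟩
  set s := sSup (fDom p σ) with hs
  have hs0 : s ≤ 0 := csSup_le hne fun x hx => (hD0 hx).le
  have hIsub : Set.Iio s ⊆ fDom p σ := by
    intro x hx
    obtain ⟨y, hy, hxy⟩ := exists_lt_of_lt_csSup hne hx
    exact hdown hxy.le hy
  have hDIic : fDom p σ ⊆ Set.Iic s := fun x hx => le_csSup hbdd hx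
  -- strict convexity
  have hconvset : Convex ℝ (fDom p σ) :=
    convex_iff_ordConnected.2 ⟨fun x _ y hy z hz => hdown hz.2 hy⟩
  have h4 : StrictConvexOn ℝ (fDom p σ) (fR p σ) := by
    refine ⟨hconvset, ?_⟩
    intro x hx y hy hxy a b ha hb hab
    have hx' : Summable fun n => p n * Real.exp (σ n * x) := hx
    have hy' : Summable fun n => p n * Real.exp (σ n * y) := hy
    simp only [smul_eq_mul]
    have hterm : ∀ n, p n * Real.exp (σ n * (a * x + b * y)) <
        a * (p n * Real.exp (σ n * x)) + b * (p n * Real.exp (σ n * y)) := by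
      intro n
      have hne : σ n * x ≠ σ n * y := fun h => hxy (mul_left_cancel₀ (hσpos n).ne' h)
      have hcx := strictConvexOn_exp.2 (Set.mem_univ (σ n * x)) (Set.mem_univ (σ n * y))
        hne ha hb hab
      simp only [smul_eq_mul] at hcx
      have h2 : σ n * (a * x + b * y) = a * (σ n * x) + b * (σ n * y) := by ring
      rw [h2]
      calc p n * Real.exp (a * (σ n * x) + b * (σ n * y))
          < p n * (a * Real.exp (σ n * x) + b * Real.exp (σ n * y)) :=
            mul_lt_mul_of_pos_left hcx (hp0 n)
        _ = a * (p n * Real.exp (σ n * x)) + b * (p n * Real.exp (σ n * y)) := by ring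
    have hsumg : Summable fun n =>
        a * (p n * Real.exp (σ n * x)) + b * (p n * Real.exp (σ n * y)) :=
      (hx'.mul_left a).add (hy'.mul_left b)
    have hlt := Summable.tsum_lt_tsum_of_nonneg (fun n => (hq n _).le) (fun n => (hterm n).le)
      (hterm 0) hsumg
    calc fR p σ (a * x + b * y)
        < ∑' n, (a * (p n * Real.exp (σ n * x)) + b * (p n * Real.exp (σ n * y))) := hlt
      _ = a * fR p σ x + b * fR p σ y := by
          rw [Summable.tsum_add (hx'.mul_left a) (hy'.mul_left b), tsum_mul_left, tsum_mul_left]; rfl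
  -- strict monotonicity of f
  have h5 : StrictMonoOn (fR p σ) (fDom p σ) := by
    intro x hx y hy hxy
    have hy' : Summable fun n => p n * Real.exp (σ n * y) := hy
    have hterm : ∀ n, p n * Real.exp (σ n * x) < p n * Real.exp (σ n * y) := fun n =>
      mul_lt_mul_of_pos_left (Real.exp_lt_exp.2 (mul_lt_mul_of_pos_left hxy (hσpos n)))
        (hp0 n)
    exact Summable.tsum_lt_tsum_of_nonneg (fun n => (hq n x).le) (fun n => (hterm n).le) (hterm 0) hy'
  -- limit of f at -∞
  have h6 : Tendsto (fR p σ) atBot (nhds 0) := by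
    have hxbar' : Summable fun n => p n * Real.exp (σ n * xbar) := hxbar
    have hmain := tendsto_tsum_of_dominated_convergence
      (𝓕 := atBot) (f := fun (x : ℝ) (n : ℕ) => p n * Real.exp (σ n * x)) (g := fun _ => (0:ℝ))
      (bound := fun n => p n * Real.exp (σ n * xbar)) hxbar' ?_ ?_
    · simp at hmain; exact hmain
    · intro n
      have h1 : Tendsto (fun x : ℝ => σ n * x) atBot atBot :=
        tendsto_id.const_mul_atBot (hσpos n)
      have h2 := Real.tendsto_exp_atBot.comp h1
      have h3 := h2.const_mul (p n)
      simpa [Function.comp] using h3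
    · filter_upwards [eventually_le_atBot xbar] with x hx n
      rw [Real.norm_eq_abs, abs_of_pos (hq n x)]
      exact hqmono n hx
  -- positivity of f on the domain
  have hfpos : ∀ x ∈ fDom p σ, 0 < fR p σ x := fun x hx =>
    Summable.tsum_pos hx (fun n => (hq n x).le) 0 (hq 0 x)
  -- infimum of f
  have h7 : sInf (fR p σ '' fDom p σ) = 0 := by
    have himg_ne : (fR p σ '' fDom p σ).Nonempty := ⟨_, Set.mem_image_of_mem _ hxbar⟩
    have hlb : ∀ y ∈ fR p σ '' fDom p σ, (0:ℝ) ≤ y := by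
      rintro _ ⟨x, hx, rfl⟩; exact (hfpos x hx).le
    refine le_antisymm ?_ (le_csInf himg_ne hlb)
    by_contra hcon
    push_neg at hcon
    obtain ⟨x, hxlt, hxs⟩ :=
      ((h6.eventually (eventually_lt_nhds hcon)).and (eventually_lt_atBot s)).exists
    have hxD : x ∈ fDom p σ := hIsub hxs
    have := csInf_le ⟨0, hlb⟩ (Set.mem_image_of_mem _ hxD)
    linarith
  -- derivative
  have h8 : ∀ x ∈ Set.Iio s, (Summable fun n => p n * σ n * Real.exp (σ n * x)) ∧
      HasDerivAt (fR p σ) (fD p σ x) x := by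
    intro x hx
    have hxs : x < s := hx
    set t : ℝ := (x + s) / 2 with ht
    set t' : ℝ := (t + s) / 2 with ht'
    have hxt : x < t := by rw [ht]; linarith
    have htt' : t < t' := by rw [ht']; linarith [show t < s by rw [ht]; linarith]
    have ht's : t' < s := by rw [ht', ht]; linarith
    have hu : Summable fun n => p n * σ n * Real.exp (σ n * t) :=
      aux_deriv_summable p σ hp hσpos htt' (hIsub ht's)
    have hsx : Summable fun n => p n * σ n * Real.exp (σ n * x) :=
      Summable.of_nonneg_of_le (fun n => (hqd n x).le) (fun n => hqdmono n hxt.le) hu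
    refine ⟨hsx, ?_⟩
    have hder : ∀ (n : ℕ) (y : ℝ), y ∈ Set.Iio t →
        HasDerivAt (fun z => p n * Real.exp (σ n * z)) (p n * σ n * Real.exp (σ n * y)) y := by
      intro n y _
      have h1 : HasDerivAt (fun z : ℝ => σ n * z) (σ n) y := by
        simpa using (hasDerivAt_id y).const_mul (σ n)
      have h2 := h1.exp.const_mul (p n)
      rw [show p n * σ n * Real.exp (σ n * y) = p n * (Real.exp (σ n * y) * σ n) by ring]
      exact h2
    have hbound : ∀ (n : ℕ) (y : ℝ), y ∈ Set.Iio t →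
        ‖p n * σ n * Real.exp (σ n * y)‖ ≤ p n * σ n * Real.exp (σ n * t) := by
      intro n y hy
      rw [Real.norm_eq_abs, abs_of_pos (hqd n y)]
      exact hqdmono n (le_of_lt hy)
    have hx' : Summable fun n => p n * Real.exp (σ n * x) := hIsub hx
    exact hasDerivAt_tsum_of_isPreconnected hu isOpen_Iio isPreconnected_Iio hder hbound
      hxt hx' hxt
  -- strict monotonicity of f'
  have h9 : StrictMonoOn (fD p σ) (Set.Iio s) := by
    intro x hx y hy hxy
    have hterm : ∀ n, p n * σ n * Real.exp (σ n * x) < p n * σ n * Real.exp (σ n * y) :=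
      fun n => mul_lt_mul_of_pos_left (Real.exp_lt_exp.2 (mul_lt_mul_of_pos_left hxy (hσpos n)))
        (mul_pos (hp0 n) (hσpos n))
    exact Summable.tsum_lt_tsum_of_nonneg (fun n => (hqd n x).le) (fun n => (hterm n).le) (hterm 0)
      (h8 y hy).1
  -- continuity of f'
  have h10 : ContinuousOn (fD p σ) (Set.Iio s) := by
    intro x hx
    apply ContinuousAt.continuousWithinAt
    have hxs : x < s := hx
    set t : ℝ := (x + s) / 2 with ht
    set t' : ℝ := (t + s) / 2 with ht'
    have hxt : x < t := by rw [ht]; linarith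
    have htt' : t < t' := by rw [ht']; linarith [show t < s by rw [ht]; linarith]
    have ht's : t' < s := by rw [ht', ht]; linarith
    have hu : Summable fun n => p n * σ n * Real.exp (σ n * t) :=
      aux_deriv_summable p σ hp hσpos htt' (hIsub ht's)
    have hmain := tendsto_tsum_of_dominated_convergence (𝓕 := nhds x)
      (f := fun (z : ℝ) (n : ℕ) => p n * σ n * Real.exp (σ n * z))
      (g := fun n => p n * σ n * Real.exp (σ n * x))
      (bound := fun n => p n * σ n * Real.exp (σ n * t)) hu ?_ ?_
    · exact hmain
    · intro n
      exact ((by fun_prop : Continuous fun z : ℝ => p n * σ n * Real.exp (σ n * z)).tendsto x)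
    · filter_upwards [Iio_mem_nhds hxt] with z hz n
      rw [Real.norm_eq_abs, abs_of_pos (hqd n z)]
      exact hqdmono n (le_of_lt hz)
  -- limit of f' at -∞
  have h11 : Tendsto (fD p σ) atBot (nhds 0) := by
    have h1s : s - 1 < s - 2⁻¹ := by norm_num
    have h2s : s - 2⁻¹ < s := by norm_num
    have hu : Summable fun n => p n * σ n * Real.exp (σ n * (s - 1)) :=
      aux_deriv_summable p σ hp hσpos h1s (hIsub h2s)
    have hmain := tendsto_tsum_of_dominated_convergence (𝓕 := atBot)
      (f := fun (z : ℝ) (n : ℕ) => p n * σ n * Real.exp (σ n * z))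
      (g := fun _ => (0:ℝ)) (bound := fun n => p n * σ n * Real.exp (σ n * (s - 1))) hu ?_ ?_
    · simp at hmain; exact hmain
    · intro n
      have h1 : Tendsto (fun x : ℝ => σ n * x) atBot atBot :=
        tendsto_id.const_mul_atBot (hσpos n)
      have h2 := Real.tendsto_exp_atBot.comp h1
      have h3 := h2.const_mul (p n * σ n)
      simpa [Function.comp] using h3
    · filter_upwards [eventually_le_atBot (s - 1)] with z hz n
      rw [Real.norm_eq_abs, abs_of_pos (hqd n z)]
      exact hqdmono n hz
  -- the ENNReal-valued derivative sum
  set G : ℝ → ℝ≥0∞ := fun y => ∑' n, ENNReal.ofReal (p n * σ n * Real.exp (σ n * y)) with hG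
  have hGmono : Monotone G := fun a b hab =>
    ENNReal.tsum_le_tsum fun n => ENNReal.ofReal_le_ofReal (hqdmono n hab)
  have hGx : ∀ x < s, ENNReal.ofReal (fD p σ x) = G x := by
    intro x hx
    rw [hG]
    exact ENNReal.ofReal_tsum_of_nonneg (fun n => (hqd n x).le) (h8 x hx).1
  have hgamma : gammaE p σ (-s) = ((G s : ℝ≥0∞) : EReal) := by
    simp only [gammaE, neg_neg, hG]
  have hsup : sSup (G '' Set.Iio s) = G s := by
    apply le_antisymm
    · apply sSup_le
      rintro _ ⟨y, hy, rfl⟩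
      exact hGmono (le_of_lt hy)
    · rw [hG]
      simp only
      rw [ENNReal.tsum_eq_iSup_sum]
      refine iSup_le fun F => ?_
      have htend : Tendsto (fun y => ∑ n ∈ F, ENNReal.ofReal (p n * σ n * Real.exp (σ n * y)))
          (nhdsWithin s (Set.Iio s))
          (nhds (∑ n ∈ F, ENNReal.ofReal (p n * σ n * Real.exp (σ n * s)))) := by
        apply tendsto_nhdsWithin_of_tendsto_nhds
        apply Continuous.tendsto
        exact continuous_finset_sum _ fun n _ => ENNReal.continuous_ofReal.comp (by fun_prop)
      refine le_of_tendsto htend ?_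
      filter_upwards [self_mem_nhdsWithin] with y hy
      refine le_trans (ENNReal.sum_le_tsum F) (le_sSup ⟨y, hy, rfl⟩)
  have hGt : Tendsto G (nhdsWithin s (Set.Iio s)) (nhds (G s)) :=
    hsup ▸ hGmono.tendsto_nhdsLT s
  -- positivity of f' on Iio s
  have hfdpos : ∀ x < s, 0 < fD p σ x := fun x hx =>
    Summable.tsum_pos (h8 x hx).1 (fun n => (hqd n x).le) 0 (hqd 0 x)
  have hcoeq : ∀ x < s, ((fD p σ x : ℝ) : EReal) = ((G x : ℝ≥0∞) : EReal) := by
    intro x hx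
    rw [← hGx x hx, EReal.coe_ennreal_ofReal, sup_eq_left.mpr (hfdpos x hx).le]
  -- the EReal limit of f' from the left at s
  have h12 : Tendsto (fun x => ((fD p σ x : ℝ) : EReal)) (nhdsWithin s (Set.Iio s))
      (nhds (gammaE p σ (-s))) := by
    rw [hgamma]
    have hcoe : Tendsto (fun x => ((G x : ℝ≥0∞) : EReal)) (nhdsWithin s (Set.Iio s))
        (nhds ((G s : ℝ≥0∞) : EReal)) := (continuous_coe_ennreal_ereal.tendsto _).comp hGt
    refine Tendsto.congr' ?_ hcoe
    filter_upwards [self_mem_nhdsWithin] with x hx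
    exact (hcoeq x hx).symm
  -- positivity of gamma
  have h13 : (0 : EReal) < gammaE p σ (-s) := by
    rw [hgamma]
    rw [EReal.coe_ennreal_pos]
    refine lt_of_lt_of_le ?_ (ENNReal.le_tsum 0)
    exact ENNReal.ofReal_pos.2 (hqd 0 s)
  -- strict comparison with gamma
  have hfdlt : ∀ x < s, ((fD p σ x : ℝ) : EReal) < gammaE p σ (-s) := by
    intro x hx
    rw [hgamma, hcoeq x hx, EReal.coe_ennreal_lt_coe_ennreal_iff]
    have hxtop : G x ≠ ⊤ := by rw [← hGx x hx]; exact ENNReal.ofReal_ne_top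
    rcases eq_or_ne (G s) ⊤ with hGs | hGs
    · rw [hGs]; exact lt_of_le_of_ne le_top hxtop
    · rw [hG]
      refine ENNReal.tsum_lt_tsum (i := 0) ?_ ?_ ?_
      · rw [show (∑' n, ENNReal.ofReal (p n * σ n * Real.exp (σ n * x))) = G x from rfl]
        exact hxtop
      · exact fun n => ENNReal.ofReal_le_ofReal (hqdmono n (le_of_lt hx))
      · exact (ENNReal.ofReal_lt_ofReal_iff (hqd 0 s)).2
          (mul_lt_mul_of_pos_left (Real.exp_lt_exp.2 (mul_lt_mul_of_pos_left hx (hσpos 0)))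
            (mul_pos (hp0 0) (hσpos 0)))
  -- the image of f'
  have h14 : fD p σ '' Set.Iio s = {y : ℝ | 0 < y ∧ ((y : ℝ) : EReal) < gammaE p σ (-s)} := by
    apply Set.eq_of_subset_of_subset
    · rintro _ ⟨x, hx, rfl⟩
      exact ⟨hfdpos x hx, hfdlt x hx⟩
    · rintro y ⟨hy0, hyγ⟩
      have hev : ∀ᶠ x in nhdsWithin s (Set.Iio s), (y : EReal) < ((fD p σ x : ℝ) : EReal) :=
        h12.eventually (eventually_gt_nhds hyγ)
      obtain ⟨x2, hx2lt, hx2s⟩ := (hev.and self_mem_nhdsWithin).exists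
      rw [EReal.coe_lt_coe_iff] at hx2lt
      obtain ⟨x1, hx1y, hx1x2⟩ :=
        ((h11.eventually (eventually_lt_nhds hy0)).and (eventually_le_atBot x2)).exists
      have hsub : Set.Icc x1 x2 ⊆ Set.Iio s := fun z hz => lt_of_le_of_lt hz.2 hx2s
      obtain ⟨x, hxmem, hxy⟩ := intermediate_value_Icc hx1x2 (h10.mono hsub)
        ⟨hx1y.le, hx2lt.le⟩
      exact ⟨x, hsub hxmem, hxy⟩
  refine ⟨-s, neg_nonneg.2 hs0, ?_, ?_, h4, h5, h6, h7, ?_, ?_, ?_, h11, ?_, h13, ?_⟩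
  · rw [neg_neg]; exact hIsub
  · rw [neg_neg, closure_Iio]
    exact fun x hx => ⟨hD0 hx, hDIic hx⟩
  · rw [neg_neg]; exact h8
  · rw [neg_neg]; exact h9
  · rw [neg_neg]; exact h10
  · rw [neg_neg]; exact h12
  · rw [neg_neg]; exact h14
end

section
/- Let (p_n)_{n≥1} ⊆ [1,∞) and (σ_n)_{n≥1} ⊆ (0,∞) with σ_n → ∞, f(x) := Σ_{n≥1} p_n e^{σ_n x}, and let α > 0 be such that (−∞,−α) ⊆ dom f ⊆ (−∞,−α]. Set γ := Σ_{n≥1} p_n σ_n e^{−σ_n α} ∈ (0,∞]. Then exactly one of the following holds: (a) dom f = (−∞,−α) and γ = ∞; (b) dom f = (−∞,−α], γ = ∞, the left derivative of f at −α equals +∞, and ∂f(−α) = ∅; (c) dom f = (−∞,−α], γ < ∞, the left derivative of f at −α equals γ, and ∂f(−α) = [γ,∞). -/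
open Filter
open scoped ENNReal

/-- The extended-real-valued function `f(x) = Σ p_n e^{σ_n x} ∈ (0,+∞]` (value `+∞` when
the series diverges). -/
noncomputable def fE (p σ : ℕ → ℝ) (x : ℝ) : EReal :=
  ((∑' n, ENNReal.ofReal (p n * Real.exp (σ n * x)) : ℝ≥0∞) : EReal)

/-- The subdifferential of a function `g : ℝ → ℝ ∪ {±∞}` at `z`. -/
def subd (g : ℝ → EReal) (z : ℝ) : Set ℝ :=
  {t : ℝ | ∀ x : ℝ, g z + ((t * (x - z) : ℝ) : EReal) ≤ g x}

private lemma tsumE_of_summable {f : ℕ → ℝ} (hf : ∀ n, 0 ≤ f n) (hs : Summable f) :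
    (∑' n, ENNReal.ofReal (f n)) = ENNReal.ofReal (∑' n, f n) :=
  (ENNReal.ofReal_tsum_of_nonneg hf hs).symm

private lemma tsumE_of_not_summable {f : ℕ → ℝ} (hf : ∀ n, 0 ≤ f n) (hs : ¬ Summable f) :
    (∑' n, ENNReal.ofReal (f n)) = ⊤ := by
  by_contra h
  exact hs ((ENNReal.summable_toReal h).congr (fun n => ENNReal.toReal_ofReal (hf n)))

/-- Trichotomy for the behaviour of `f` at the endpoint `−α` of its domain. -/
theorem stmt12 (p σ : ℕ → ℝ) (hp : ∀ n, 1 ≤ p n) (hσpos : ∀ n, 0 < σ n)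
    (hσtop : Tendsto σ atTop atTop) (α : ℝ) (hα : 0 < α)
    (h1 : Set.Iio (-α) ⊆ fDom p σ) (h2 : fDom p σ ⊆ Set.Iic (-α)) :
    (fDom p σ = Set.Iio (-α) ∧ gammaE p σ α = ⊤) ∨
    (fDom p σ = Set.Iic (-α) ∧ gammaE p σ α = ⊤ ∧
      Tendsto (fun y => (fR p σ y - fR p σ (-α)) / (y - (-α)))
        (nhdsWithin (-α) (Set.Iio (-α))) atTop ∧
      subd (fE p σ) (-α) = ∅) ∨
    (fDom p σ = Set.Iic (-α) ∧ gammaE p σ α < ⊤ ∧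
      ∃ γ : ℝ, gammaE p σ α = ((γ : ℝ) : EReal) ∧
        Tendsto (fun y => (fR p σ y - fR p σ (-α)) / (y - (-α)))
          (nhdsWithin (-α) (Set.Iio (-α))) (nhds γ) ∧
        subd (fE p σ) (-α) = Set.Ici γ) := by
  have hapos : ∀ n (x : ℝ), 0 < p n * Real.exp (σ n * x) :=
    fun n x => mul_pos (lt_of_lt_of_le one_pos (hp n)) (Real.exp_pos _)
  have hbpos : ∀ n, 0 < p n * σ n * Real.exp (σ n * (-α)) :=
    fun n => mul_pos (mul_pos (lt_of_lt_of_le one_pos (hp n)) (hσpos n)) (Real.exp_pos _)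
  have key : ∀ n (x : ℝ), p n * Real.exp (σ n * (-α)) +
      p n * σ n * Real.exp (σ n * (-α)) * (x - (-α)) ≤ p n * Real.exp (σ n * x) := by
    intro n x
    have h := Real.add_one_le_exp (σ n * (x + α))
    have hpe : (0:ℝ) < p n * Real.exp (σ n * (-α)) := hapos n (-α)
    have e : Real.exp (σ n * x) = Real.exp (σ n * (-α)) * Real.exp (σ n * (x + α)) := by
      rw [← Real.exp_add]; ring_nf
    have h2' := mul_le_mul_of_nonneg_left h hpe.le
    rw [e]; nlinarith [h2']
  have hamono : ∀ n, ∀ x y : ℝ, x ≤ y →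
      p n * Real.exp (σ n * x) ≤ p n * Real.exp (σ n * y) := by
    intro n x y hxy
    have := Real.exp_le_exp.2 (mul_le_mul_of_nonneg_left hxy (hσpos n).le)
    exact mul_le_mul_of_nonneg_left this (le_trans zero_le_one (hp n))
  have hcomp : Summable (fun n => p n * σ n * Real.exp (σ n * (-α))) →
      Summable (fun n => p n * Real.exp (σ n * (-α))) := by
    intro hb
    apply Summable.of_norm_bounded_eventually hb
    rw [Nat.cofinite_eq_atTop]
    filter_upwards [hσtop.eventually_ge_atTop 1] with n hn
    rw [Real.norm_eq_abs, abs_of_pos (hapos n _)]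
    have h := mul_le_mul_of_nonneg_left hn (hapos n (-α)).le
    nlinarith [h]
  have hsum_y : ∀ y : ℝ, y < -α → Summable (fun n => p n * Real.exp (σ n * y)) :=
    fun y hy => h1 hy
  have hfE_coe : ∀ x : ℝ, Summable (fun n => p n * Real.exp (σ n * x)) →
      fE p σ x = ((fR p σ x : ℝ) : EReal) := by
    intro x hs
    rw [fE, tsumE_of_summable (fun n => (hapos n x).le) hs, EReal.coe_ennreal_ofReal, fR,
      max_eq_left (tsum_nonneg fun n => (hapos n x).le)]
  have hfE_top : ∀ x : ℝ, ¬ Summable (fun n => p n * Real.exp (σ n * x)) →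
      fE p σ x = ⊤ := by
    intro x hs
    rw [fE, tsumE_of_not_summable (fun n => (hapos n x).le) hs, EReal.coe_ennreal_top]
  by_cases hdomneg : Summable (fun n => p n * Real.exp (σ n * (-α)))
  · -- cases (b) and (c)
    have hdom_eq : fDom p σ = Set.Iic (-α) := by
      apply Set.Subset.antisymm h2
      intro x hx
      have hx' : x ≤ -α := hx
      rcases lt_or_eq_of_le hx' with h | h
      · exact h1 h
      · rw [show x ∈ fDom p σ ↔ Summable (fun n => p n * Real.exp (σ n * x)) from Iff.rfl, h]
        exact hdomneg
    -- difference quotient identity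
    have hsumc : ∀ y : ℝ, y < -α → Summable (fun n =>
        (p n * Real.exp (σ n * y) - p n * Real.exp (σ n * (-α))) / (y - (-α))) :=
      fun y hy => ((hsum_y y hy).sub hdomneg).div_const _
    have hQeq : ∀ y : ℝ, y < -α → (fR p σ y - fR p σ (-α)) / (y - (-α)) =
        ∑' n, (p n * Real.exp (σ n * y) - p n * Real.exp (σ n * (-α))) / (y - (-α)) := by
      intro y hy
      rw [fR, fR, ← Summable.tsum_sub (hsum_y y hy) hdomneg, tsum_div_const]
    have hc_nonneg : ∀ y : ℝ, y < -α → ∀ n,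
        0 ≤ (p n * Real.exp (σ n * y) - p n * Real.exp (σ n * (-α))) / (y - (-α)) := by
      intro y hy n
      exact div_nonneg_iff.2 (Or.inr ⟨sub_nonpos.2 (hamono n y (-α) hy.le), by linarith⟩)
    have hc_le_b : ∀ y : ℝ, y < -α → ∀ n,
        (p n * Real.exp (σ n * y) - p n * Real.exp (σ n * (-α))) / (y - (-α)) ≤
          p n * σ n * Real.exp (σ n * (-α)) := by
      intro y hy n
      rw [div_le_iff_of_neg (by linarith : y - (-α) < 0)]
      have := key n y
      linarith
    -- finite-sum slopes
    have hF : ∀ N : ℕ, HasDerivAt (fun x => ∑ n ∈ Finset.range N, p n * Real.exp (σ n * x))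
        (∑ n ∈ Finset.range N, p n * σ n * Real.exp (σ n * (-α))) (-α) := by
      intro N
      apply HasDerivAt.fun_sum
      intro n _
      have hlin : HasDerivAt (fun x : ℝ => σ n * x) (σ n) (-α) := by
        simpa using (hasDerivAt_id (-α : ℝ)).const_mul (σ n)
      have hexp : HasDerivAt (fun x : ℝ => Real.exp (σ n * x))
          (Real.exp (σ n * (-α)) * σ n) (-α) := (Real.hasDerivAt_exp _).comp _ hlin
      have := hexp.const_mul (p n)
      exact this.congr_deriv (by ring)
    have hslope : ∀ N : ℕ, Tendsto (fun y => ∑ n ∈ Finset.range N,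
        (p n * Real.exp (σ n * y) - p n * Real.exp (σ n * (-α))) / (y - (-α)))
        (nhdsWithin (-α) (Set.Iio (-α)))
        (nhds (∑ n ∈ Finset.range N, p n * σ n * Real.exp (σ n * (-α)))) := by
      intro N
      have h' := (hasDerivAt_iff_tendsto_slope.1 (hF N)).mono_left
        (nhdsWithin_mono _ (fun x (hx : x < -α) => (ne_of_lt hx : x ≠ -α)))
      apply Tendsto.congr' _ h'
      filter_upwards [eventually_mem_nhdsWithin] with y (hy : y < -α)
      simp only [slope_def_field, sub_div, Finset.sum_div, Finset.sum_sub_distrib]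
    have hlower : ∀ N : ℕ, ∀ y : ℝ, y < -α →
        (∑ n ∈ Finset.range N,
          (p n * Real.exp (σ n * y) - p n * Real.exp (σ n * (-α))) / (y - (-α))) ≤
        (fR p σ y - fR p σ (-α)) / (y - (-α)) := by
      intro N y hy
      rw [hQeq y hy]
      exact Summable.sum_le_tsum _ (fun i _ => hc_nonneg y hy i) (hsumc y hy)
    haveI : (nhdsWithin (-α : ℝ) (Set.Iio (-α))).NeBot := nhdsLT_neBot _
    have hub_of_subd : ∀ t, t ∈ subd (fE p σ) (-α) → ∀ y : ℝ, y < -α →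
        (fR p σ y - fR p σ (-α)) / (y - (-α)) ≤ t := by
      intro t ht y hy
      have h := ht y
      rw [hfE_coe y (hsum_y y hy), hfE_coe (-α) hdomneg, ← EReal.coe_add,
        EReal.coe_le_coe_iff] at h
      rw [div_le_iff_of_neg (by linarith : y - (-α) < 0)]
      linarith
    by_cases hbsum : Summable (fun n => p n * σ n * Real.exp (σ n * (-α)))
    · -- case (c)
      right; right
      have hγval : gammaE p σ α = (((∑' n, p n * σ n * Real.exp (σ n * (-α))) : ℝ) : EReal) := by
        rw [gammaE, tsumE_of_summable (fun n => (hbpos n).le) hbsum, EReal.coe_ennreal_ofReal,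
          max_eq_left (tsum_nonneg fun n => (hbpos n).le)]
      have hQtendsto : Tendsto (fun y => (fR p σ y - fR p σ (-α)) / (y - (-α)))
          (nhdsWithin (-α) (Set.Iio (-α)))
          (nhds (∑' n, p n * σ n * Real.exp (σ n * (-α)))) := by
        rw [tendsto_order]
        constructor
        · intro c hc
          obtain ⟨N, hN⟩ := (hbsum.hasSum.tendsto_sum_nat.eventually
            (eventually_gt_nhds hc)).exists
          filter_upwards [(hslope N).eventually (eventually_gt_nhds hN),
            eventually_mem_nhdsWithin] with y hy1 (hy2 : y < -α)
          exact lt_of_lt_of_le hy1 (hlower N y hy2)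
        · intro c hc
          filter_upwards [eventually_mem_nhdsWithin] with y (hy : y < -α)
          have : (fR p σ y - fR p σ (-α)) / (y - (-α)) ≤
              ∑' n, p n * σ n * Real.exp (σ n * (-α)) := by
            rw [hQeq y hy]
            exact Summable.tsum_le_tsum (hc_le_b y hy) (hsumc y hy) hbsum
          linarith
      refine ⟨hdom_eq, ?_, ∑' n, p n * σ n * Real.exp (σ n * (-α)), hγval, hQtendsto, ?_⟩
      · rw [hγval]; exact EReal.coe_lt_top _
      · ext t
        simp only [Set.mem_Ici]
        constructor
        · intro ht
          exact le_of_tendsto hQtendsto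
            (eventually_mem_nhdsWithin.mono fun y hy => hub_of_subd t ht y hy)
        · intro ht x
          by_cases hx : x ≤ -α
          · have hxd : Summable (fun n => p n * Real.exp (σ n * x)) := by
              rcases lt_or_eq_of_le hx with h | h
              · exact h1 h
              · rw [h]; exact hdomneg
            rw [hfE_coe x hxd, hfE_coe (-α) hdomneg, ← EReal.coe_add, EReal.coe_le_coe_iff]
            have ht' : t * (x - (-α)) ≤
                (∑' n, p n * σ n * Real.exp (σ n * (-α))) * (x - (-α)) :=
              mul_le_mul_of_nonpos_right ht (by linarith)
            have hsL : Summable (fun n => p n * Real.exp (σ n * (-α)) +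
                p n * σ n * Real.exp (σ n * (-α)) * (x - (-α))) :=
              hdomneg.add (hbsum.mul_right _)
            have hkey := Summable.tsum_le_tsum (fun n => key n x) hsL hxd
            rw [Summable.tsum_add hdomneg (hbsum.mul_right _), tsum_mul_right] at hkey
            show fR p σ (-α) + t * (x - (-α)) ≤ fR p σ x
            rw [fR, fR]
            linarith
          · push_neg at hx
            rw [hfE_top x (fun hs => absurd (h2 hs) (not_le.2 hx))]
            exact le_top
    · -- case (b)
      right; left
      have hγtop : gammaE p σ α = ⊤ := by
        rw [gammaE, tsumE_of_not_summable (fun n => (hbpos n).le) hbsum, EReal.coe_ennreal_top]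
      have hQtop : Tendsto (fun y => (fR p σ y - fR p σ (-α)) / (y - (-α)))
          (nhdsWithin (-α) (Set.Iio (-α))) atTop := by
        rw [tendsto_atTop]
        intro c
        have hpartial := (not_summable_iff_tendsto_nat_atTop_of_nonneg
          (fun n => (hbpos n).le)).1 hbsum
        obtain ⟨N, hN⟩ := (hpartial.eventually (eventually_gt_atTop c)).exists
        filter_upwards [(hslope N).eventually (eventually_gt_nhds hN),
          eventually_mem_nhdsWithin] with y hy1 (hy2 : y < -α)
        exact le_of_lt (lt_of_lt_of_le hy1 (hlower N y hy2))
      refine ⟨hdom_eq, hγtop, hQtop, ?_⟩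
      rw [Set.eq_empty_iff_forall_notMem]
      intro t ht
      obtain ⟨y, hy1, (hy2 : y < -α)⟩ :=
        ((hQtop.eventually (eventually_gt_atTop t)).and eventually_mem_nhdsWithin).exists
      exact absurd (hub_of_subd t ht y hy2) (not_le.2 hy1)
  · -- case (a)
    left
    constructor
    · apply Set.Subset.antisymm _ h1
      intro x hx
      have hx' : x ≤ -α := h2 hx
      have : x ≠ -α := fun he => hdomneg (by rw [← he]; exact hx)
      exact lt_of_le_of_ne hx' this
    · have hb : ¬ Summable (fun n => p n * σ n * Real.exp (σ n * (-α))) :=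
        fun hb => hdomneg (hcomp hb)
      rw [gammaE, tsumE_of_not_summable (fun n => (hbpos n).le) hb, EReal.coe_ennreal_top]
end

section
/- Let (p_n)_{n≥1} ⊆ [1,∞) and (σ_n)_{n≥1} ⊆ (0,∞) with σ_n → ∞, assume dom f ≠ ∅ where f(x) := Σ_{n≥1} p_n e^{σ_n x}, and set θ_1 := min_n σ_n. For W ∈ {E_MB, E_FD, E_BE} define h_W(x,y) := Σ_{n≥1} p_n W*(x + σ_n y). Then each h_W is convex, lower semicontinuous and everywhere strictly positive; dom h_FD = dom h_MB = ℝ × dom f; and dom h_BE = {(x,y) ∈ ℝ × dom f : x + θ_1 y < 0}. -/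
open Filter
open scoped ENNReal

section helpers

lemma tsum_ofReal_ne_top_iff {f : ℕ → ℝ} (hf : ∀ n, 0 ≤ f n) :
    (∑' n, ENNReal.ofReal (f n)) ≠ ⊤ ↔ Summable f := by
  constructor
  · intro h
    have h2 := ENNReal.summable_toReal h
    have he : (fun n => (ENNReal.ofReal (f n)).toReal) = f :=
      funext fun n => ENNReal.toReal_ofReal (hf n)
    rwa [he] at h2
  · intro h
    rw [← ENNReal.ofReal_tsum_of_nonneg hf h]
    exact ENNReal.ofReal_ne_top

lemma tsum_conv {ι : Type*} (g : ι → ℝ × ℝ → ℝ≥0∞)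
    (hg : ∀ i (z z' : ℝ × ℝ) (l : ℝ), 0 ≤ l → l ≤ 1 →
      g i (l • z + (1 - l) • z') ≤ ENNReal.ofReal l * g i z + ENNReal.ofReal (1 - l) * g i z')
    (z z' : ℝ × ℝ) (l : ℝ) (h0 : 0 ≤ l) (h1 : l ≤ 1) :
    (∑' i, g i (l • z + (1 - l) • z')) ≤
      ENNReal.ofReal l * (∑' i, g i z) + ENNReal.ofReal (1 - l) * (∑' i, g i z') := by
  rw [← ENNReal.tsum_mul_left, ← ENNReal.tsum_mul_left, ← ENNReal.tsum_add]
  exact ENNReal.tsum_le_tsum fun i => hg i z z' l h0 h1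

lemma term_conv {φ : ℝ → ℝ} (hφ : ConvexOn ℝ Set.univ φ) (c b : ℝ) (hc : 0 ≤ c)
    (z z' : ℝ × ℝ) (l : ℝ) (h0 : 0 ≤ l) (h1 : l ≤ 1) :
    ENNReal.ofReal (c * φ ((l • z + (1 - l) • z').1 + b * (l • z + (1 - l) • z').2)) ≤
      ENNReal.ofReal l * ENNReal.ofReal (c * φ (z.1 + b * z.2)) +
      ENNReal.ofReal (1 - l) * ENNReal.ofReal (c * φ (z'.1 + b * z'.2)) := by
  set t₁ := z.1 + b * z.2
  set t₂ := z'.1 + b * z'.2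
  have ht : (l • z + (1 - l) • z').1 + b * (l • z + (1 - l) • z').2 = l * t₁ + (1 - l) * t₂ := by
    simp only [t₁, t₂, Prod.fst_add, Prod.smul_fst, Prod.snd_add, Prod.smul_snd, smul_eq_mul]
    ring
  have hconv := hφ.2 (Set.mem_univ t₁) (Set.mem_univ t₂) h0 (show (0:ℝ) ≤ 1 - l by linarith) (by ring)
  simp only [smul_eq_mul] at hconv
  rw [ht]
  calc ENNReal.ofReal (c * φ (l * t₁ + (1 - l) * t₂))
      ≤ ENNReal.ofReal (l * (c * φ t₁) + (1 - l) * (c * φ t₂)) := by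
        apply ENNReal.ofReal_le_ofReal
        nlinarith [mul_le_mul_of_nonneg_left hconv hc]
    _ ≤ ENNReal.ofReal (l * (c * φ t₁)) + ENNReal.ofReal ((1 - l) * (c * φ t₂)) :=
        ENNReal.ofReal_add_le
    _ = _ := by
        rw [ENNReal.ofReal_mul h0, ENNReal.ofReal_mul (by linarith : (0:ℝ) ≤ 1 - l)]

lemma convexOn_exp_mul (c : ℝ) : ConvexOn ℝ Set.univ fun t => Real.exp (c * t) := by
  refine ⟨convex_univ, fun x _ y _ a b ha hb hab => ?_⟩
  simp only [smul_eq_mul]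
  calc Real.exp (c * (a * x + b * y)) = Real.exp (a * (c * x) + b * (c * y)) := by ring_nf
    _ ≤ a * Real.exp (c * x) + b * Real.exp (c * y) := by
        have := convexOn_exp.2 (Set.mem_univ (c * x)) (Set.mem_univ (c * y)) ha hb hab
        simpa using this


lemma holder2 {a₁ a₂ b₁ b₂ l : ℝ} (ha₁ : 0 < a₁) (ha₂ : 0 < a₂) (hb₁ : 0 < b₁) (hb₂ : 0 < b₂)
    (h0 : 0 ≤ l) (h1 : l ≤ 1) :
    a₁ ^ l * b₁ ^ (1 - l) + a₂ ^ l * b₂ ^ (1 - l) ≤ (a₁ + a₂) ^ l * (b₁ + b₂) ^ (1 - l) := by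
  set A := a₁ + a₂ with hA_def
  set B := b₁ + b₂ with hB_def
  have hA : 0 < A := by positivity
  have hB : 0 < B := by positivity
  have hl' : (0:ℝ) ≤ 1 - l := by linarith
  have g1 := Real.geom_mean_le_arith_mean2_weighted h0 hl'
    (div_nonneg ha₁.le hA.le) (div_nonneg hb₁.le hB.le) (by ring)
  have g2 := Real.geom_mean_le_arith_mean2_weighted h0 hl'
    (div_nonneg ha₂.le hA.le) (div_nonneg hb₂.le hB.le) (by ring)
  have hpos : (0:ℝ) ≤ A ^ l * B ^ (1 - l) := by positivity
  have e1 : a₁ ^ l * b₁ ^ (1 - l) ≤ (l * (a₁ / A) + (1 - l) * (b₁ / B)) * (A ^ l * B ^ (1 - l)) := by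
    have h := mul_le_mul_of_nonneg_right g1 hpos
    calc a₁ ^ l * b₁ ^ (1 - l) = (a₁ / A) ^ l * (b₁ / B) ^ (1 - l) * (A ^ l * B ^ (1 - l)) := by
          rw [Real.div_rpow ha₁.le hA.le, Real.div_rpow hb₁.le hB.le]
          field_simp
      _ ≤ _ := h
  have e2 : a₂ ^ l * b₂ ^ (1 - l) ≤ (l * (a₂ / A) + (1 - l) * (b₂ / B)) * (A ^ l * B ^ (1 - l)) := by
    have h := mul_le_mul_of_nonneg_right g2 hpos
    calc a₂ ^ l * b₂ ^ (1 - l) = (a₂ / A) ^ l * (b₂ / B) ^ (1 - l) * (A ^ l * B ^ (1 - l)) := by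
          rw [Real.div_rpow ha₂.le hA.le, Real.div_rpow hb₂.le hB.le]
          field_simp
      _ ≤ _ := h
  have key : (l * (a₁ / A) + (1 - l) * (b₁ / B)) + (l * (a₂ / A) + (1 - l) * (b₂ / B)) = 1 := by
    have hA' : a₁ / A + a₂ / A = 1 := by field_simp; exact hA_def.symm
    have hB' : b₁ / B + b₂ / B = 1 := by field_simp; exact hB_def.symm
    nlinarith [hA', hB']
  calc a₁ ^ l * b₁ ^ (1 - l) + a₂ ^ l * b₂ ^ (1 - l)
      ≤ ((l * (a₁ / A) + (1 - l) * (b₁ / B)) + (l * (a₂ / A) + (1 - l) * (b₂ / B)))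
          * (A ^ l * B ^ (1 - l)) := by nlinarith [e1, e2]
    _ = A ^ l * B ^ (1 - l) := by rw [key, one_mul]

lemma convexOn_FD : ConvexOn ℝ Set.univ fun t => Real.log (1 + Real.exp t) := by
  refine ⟨convex_univ, fun x _ y _ a b ha hb hab => ?_⟩
  simp only [smul_eq_mul]
  have hb' : b = 1 - a := by linarith
  subst hb'
  have he : Real.exp (a * x + (1 - a) * y) = Real.exp x ^ a * Real.exp y ^ (1 - a) := by
    rw [Real.exp_add, mul_comm a x, mul_comm (1 - a) y, Real.exp_mul, Real.exp_mul]
  have h1 : 1 + Real.exp (a * x + (1 - a) * y)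
      ≤ (1 + Real.exp x) ^ a * (1 + Real.exp y) ^ (1 - a) := by
    have h := holder2 one_pos (Real.exp_pos x) one_pos (Real.exp_pos y) ha (by linarith)
    rw [he]
    simpa using h
  calc Real.log (1 + Real.exp (a * x + (1 - a) * y))
      ≤ Real.log ((1 + Real.exp x) ^ a * (1 + Real.exp y) ^ (1 - a)) := by
        apply Real.log_le_log (by positivity) h1
    _ = a * Real.log (1 + Real.exp x) + (1 - a) * Real.log (1 + Real.exp y) := by
        rw [Real.log_mul (by positivity) (by positivity),
          Real.log_rpow (by positivity), Real.log_rpow (by positivity)]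

lemma log_one_add_le {v : ℝ} (hv : 0 ≤ v) : Real.log (1 + v) ≤ v := by
  have := Real.log_le_sub_one_of_pos (show (0:ℝ) < 1 + v by linarith)
  linarith

lemma half_le_log_one_add {v : ℝ} (hv : 0 ≤ v) (hv1 : v ≤ 1) : v / 2 ≤ Real.log (1 + v) := by
  have h := Real.one_sub_inv_le_log_of_pos (show (0:ℝ) < 1 + v by linarith)
  have he : 1 - (1 + v)⁻¹ = v / (1 + v) := by field_simp; ring
  rw [he] at h
  have h2 : v / 2 ≤ v / (1 + v) := by
    apply div_le_div_of_nonneg_left hv (by linarith) (by linarith)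
  linarith

lemma le_neg_log {u : ℝ} (hu0 : 0 ≤ u) (hu1 : u < 1) : u ≤ -Real.log (1 - u) := by
  have := Real.log_le_sub_one_of_pos (show (0:ℝ) < 1 - u by linarith)
  linarith

lemma neg_log_le {u : ℝ} (hu0 : 0 ≤ u) (hu1 : u < 1) : -Real.log (1 - u) ≤ u / (1 - u) := by
  have h := Real.one_sub_inv_le_log_of_pos (show (0:ℝ) < 1 - u by linarith)
  have hne : (1:ℝ) - u ≠ 0 := by linarith
  have he : 1 - (1 - u)⁻¹ = -(u / (1 - u)) := by
    field_simp
    ring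
  rw [he] at h
  linarith


lemma hBE_term_repr {p : ℕ → ℝ} (hp : ∀ n, 1 ≤ p n) (n : ℕ) (t : ℝ) :
    (if t < 0 then ENNReal.ofReal (p n * (-Real.log (1 - Real.exp t))) else ⊤)
      = ∑' k : ℕ, ENNReal.ofReal ((p n / ((k : ℝ) + 1)) * Real.exp (((k : ℝ) + 1) * t)) := by
  have hp0 : 0 ≤ p n := le_trans zero_le_one (hp n)
  have hterm : ∀ k : ℕ, p n * (Real.exp t ^ (k + 1) / ((k : ℝ) + 1))
      = (p n / ((k : ℝ) + 1)) * Real.exp (((k : ℝ) + 1) * t) := by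
    intro k
    rw [show ((k : ℝ) + 1) * t = ((k + 1 : ℕ) : ℝ) * t by push_cast; ring, Real.exp_nat_mul]
    ring
  by_cases ht : t < 0
  · rw [if_pos ht]
    have hx : |Real.exp t| < 1 := by
      rw [abs_of_pos (Real.exp_pos t)]
      exact Real.exp_lt_one_iff.2 ht
    have hs := (Real.hasSum_pow_div_log_of_abs_lt_one hx).mul_left (p n)
    calc ENNReal.ofReal (p n * (-Real.log (1 - Real.exp t)))
        = ENNReal.ofReal (∑' k : ℕ, p n * (Real.exp t ^ (k + 1) / ((k : ℝ) + 1))) := by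
          rw [hs.tsum_eq]
      _ = ∑' k : ℕ, ENNReal.ofReal (p n * (Real.exp t ^ (k + 1) / ((k : ℝ) + 1))) :=
          ENNReal.ofReal_tsum_of_nonneg (fun k => by positivity) hs.summable
      _ = _ := tsum_congr fun k => by rw [hterm k]
  · rw [if_neg ht]
    push_neg at ht
    symm
    by_contra hne
    have hsum : Summable (fun k : ℕ => (p n / ((k : ℝ) + 1)) * Real.exp (((k : ℝ) + 1) * t)) :=
      (tsum_ofReal_ne_top_iff (fun k => by positivity)).1 hne
    have hcomp : Summable (fun k : ℕ => 1 / ((k : ℝ) + 1)) := by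
      refine hsum.of_nonneg_of_le (fun k => by positivity) (fun k => ?_)
      have h1 : (1 : ℝ) ≤ p n := hp n
      have h2 : (1 : ℝ) ≤ Real.exp (((k : ℝ) + 1) * t) := Real.one_le_exp (by positivity)
      rw [div_mul_eq_mul_div]
      apply div_le_div_of_nonneg_right ?_ (by positivity)
      nlinarith
    have hcomp' : Summable (fun k : ℕ => (fun m : ℕ => 1 / (m : ℝ)) (k + 1)) := by
      simpa using hcomp
    exact Real.not_summable_one_div_natCast ((summable_nat_add_iff 1).1 hcomp')

lemma summable_shift (p σ : ℕ → ℝ) (x y : ℝ) :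
    Summable (fun n => p n * Real.exp (x + σ n * y)) ↔
      Summable (fun n => p n * Real.exp (σ n * y)) := by
  have he : (fun n => p n * Real.exp (x + σ n * y))
      = fun n => (p n * Real.exp (σ n * y)) * Real.exp x := by
    funext n; rw [Real.exp_add]; ring
  rw [he]
  exact summable_mul_right_iff (Real.exp_pos x).ne'

lemma fdom_neg {p σ : ℕ → ℝ} (hp : ∀ n, 1 ≤ p n) (hσpos : ∀ n, 0 < σ n) {y : ℝ}
    (hy : Summable fun n => p n * Real.exp (σ n * y)) : y < 0 := by
  by_contra h
  push_neg at h
  have h0 := hy.tendsto_atTop_zero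
  have hge : ∀ n, (1 : ℝ) ≤ p n * Real.exp (σ n * y) := fun n => by
    have h1 := Real.one_le_exp (mul_nonneg (hσpos n).le h)
    nlinarith [hp n]
  obtain ⟨n, hn⟩ := (h0.eventually_lt_const one_pos).exists
  linarith [hge n]

lemma sigma_min {σ : ℕ → ℝ} (hσtop : Tendsto σ atTop atTop) :
    ∃ m, ∀ n, σ m ≤ σ n := by
  obtain ⟨N, hN⟩ := eventually_atTop.1 (hσtop.eventually_ge_atTop (σ 0))
  obtain ⟨m, hm_mem, hm⟩ := Finset.exists_min_image (Finset.range (N + 1)) σ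
    ⟨0, Finset.mem_range.2 (Nat.succ_pos N)⟩
  refine ⟨m, fun n => ?_⟩
  rcases lt_or_ge n (N + 1) with h | h
  · exact hm n (Finset.mem_range.2 h)
  · exact le_trans (hm 0 (Finset.mem_range.2 (Nat.succ_pos N))) (hN n (by omega))

lemma FD_summable_iff {p σ : ℕ → ℝ} (hp : ∀ n, 1 ≤ p n) (x y : ℝ) :
    Summable (fun n => p n * Real.log (1 + Real.exp (x + σ n * y))) ↔
      Summable (fun n => p n * Real.exp (x + σ n * y)) := by
  have hp0 : ∀ n, (0:ℝ) ≤ p n := fun n => le_trans zero_le_one (hp n)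
  constructor
  · intro hS
    have hlognn : ∀ n, 0 ≤ Real.log (1 + Real.exp (x + σ n * y)) :=
      fun n => Real.log_nonneg (by linarith [Real.exp_pos (x + σ n * y)])
    have hlog0 : Tendsto (fun n => Real.log (1 + Real.exp (x + σ n * y))) atTop (nhds 0) := by
      refine squeeze_zero (fun n => hlognn n) (fun n => ?_) hS.tendsto_atTop_zero
      nlinarith [hp n, hlognn n]
    have hexp1 : Tendsto (fun n => 1 + Real.exp (x + σ n * y)) atTop (nhds 1) := by
      have h := (Real.continuous_exp.tendsto 0).comp hlog0
      have heq : (fun n => Real.exp (Real.log (1 + Real.exp (x + σ n * y))))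
          = fun n => 1 + Real.exp (x + σ n * y) :=
        funext fun n => Real.exp_log (by positivity)
      rw [show Real.exp ∘ (fun n => Real.log (1 + Real.exp (x + σ n * y)))
          = fun n => 1 + Real.exp (x + σ n * y) from heq ▸ rfl] at h
      simpa [Real.exp_zero] using h
    have hexp0 : Tendsto (fun n => Real.exp (x + σ n * y)) atTop (nhds 0) := by
      have h := hexp1.sub_const 1
      simpa using h
    obtain ⟨N, hN⟩ := eventually_atTop.1 (hexp0.eventually_lt_const one_pos)
    have hS' : Summable (fun k => p (k + N) * Real.log (1 + Real.exp (x + σ (k + N) * y))) :=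
      (summable_nat_add_iff N).2 hS
    have hcmp : Summable (fun k => p (k + N) * Real.exp (x + σ (k + N) * y)) := by
      refine Summable.of_nonneg_of_le
        (fun k => mul_nonneg (hp0 _) (Real.exp_pos _).le) (fun k => ?_) (hS'.mul_left 2)
      have h1 : Real.exp (x + σ (k + N) * y) ≤ 1 := (hN _ (Nat.le_add_left N k)).le
      have h2 := half_le_log_one_add (Real.exp_pos (x + σ (k + N) * y)).le h1
      nlinarith [mul_le_mul_of_nonneg_left h2 (hp0 (k + N))]
    exact (summable_nat_add_iff N).1 hcmp
  · intro hS
    refine Summable.of_nonneg_of_le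
      (fun n => mul_nonneg (hp0 n) (Real.log_nonneg (by linarith [Real.exp_pos (x + σ n * y)]))) (fun n => ?_) hS
    · exact mul_le_mul_of_nonneg_left (log_one_add_le (Real.exp_pos _).le) (hp0 n)



end helpers

/-- `h_MB(x,y) = Σ_n p_n E_MB^*(x+σ_n y) = Σ_n p_n e^{x+σ_n y} ∈ (0,+∞]`. -/
noncomputable def hMBe (p σ : ℕ → ℝ) (z : ℝ × ℝ) : ℝ≥0∞ :=
  ∑' n, ENNReal.ofReal (p n * Real.exp (z.1 + σ n * z.2))

/-- `h_FD(x,y) = Σ_n p_n E_FD^*(x+σ_n y) = Σ_n p_n ln(1+e^{x+σ_n y}) ∈ (0,+∞]`. -/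
noncomputable def hFDe (p σ : ℕ → ℝ) (z : ℝ × ℝ) : ℝ≥0∞ :=
  ∑' n, ENNReal.ofReal (p n * Real.log (1 + Real.exp (z.1 + σ n * z.2)))

/-- `h_BE(x,y) = Σ_n p_n E_BE^*(x+σ_n y)`, where `E_BE^*(t) = −ln(1−e^t)` for `t < 0`
and `+∞` for `t ≥ 0`. -/
noncomputable def hBEe (p σ : ℕ → ℝ) (z : ℝ × ℝ) : ℝ≥0∞ :=
  ∑' n, if z.1 + σ n * z.2 < 0 then
    ENNReal.ofReal (p n * (-Real.log (1 - Real.exp (z.1 + σ n * z.2)))) else ⊤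

/-- Under `(A_{σf})`, each `h_W` is convex, lower semicontinuous and strictly positive;
`dom h_FD = dom h_MB = ℝ × dom f` and `dom h_BE = {(x,y) ∈ ℝ × dom f : x + θ₁ y < 0}`,
`θ₁ := min_n σ_n = inf_n σ_n`. -/
theorem stmt13 (p σ : ℕ → ℝ) (hp : ∀ n, 1 ≤ p n) (hσpos : ∀ n, 0 < σ n)
    (hσtop : Tendsto σ atTop atTop) (hne : (fDom p σ).Nonempty) :
    (∀ h ∈ ({hMBe p σ, hFDe p σ, hBEe p σ} : Set (ℝ × ℝ → ℝ≥0∞)),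
      (∀ z z' : ℝ × ℝ, ∀ l : ℝ, 0 ≤ l → l ≤ 1 →
        h (l • z + (1 - l) • z') ≤ ENNReal.ofReal l * h z + ENNReal.ofReal (1 - l) * h z') ∧
      LowerSemicontinuous h ∧ (∀ z, 0 < h z)) ∧
    {z : ℝ × ℝ | hFDe p σ z < ⊤} = Set.univ ×ˢ fDom p σ ∧
    {z : ℝ × ℝ | hMBe p σ z < ⊤} = Set.univ ×ˢ fDom p σ ∧
    {z : ℝ × ℝ | hBEe p σ z < ⊤} =
      {z : ℝ × ℝ | z.2 ∈ fDom p σ ∧ z.1 + sInf (Set.range σ) * z.2 < 0} := by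
  obtain ⟨m, hm⟩ := sigma_min hσtop
  have hp0 : ∀ n, (0:ℝ) ≤ p n := fun n => le_trans zero_le_one (hp n)
  have hsInf : sInf (Set.range σ) = σ m := by
    refine le_antisymm (csInf_le ⟨σ m, ?_⟩ ⟨m, rfl⟩) (le_csInf (Set.range_nonempty σ) ?_)
    · rintro _ ⟨n, rfl⟩; exact hm n
    · rintro _ ⟨n, rfl⟩; exact hm n
  have hBErepr : ∀ z : ℝ × ℝ, hBEe p σ z = ∑' n, ∑' k : ℕ,
      ENNReal.ofReal ((p n / ((k : ℝ) + 1)) * Real.exp (((k : ℝ) + 1) * (z.1 + σ n * z.2))) :=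
    fun z => tsum_congr fun n => hBE_term_repr hp n _
  have hnnBE : ∀ z : ℝ × ℝ, (∀ n, z.1 + σ n * z.2 < 0) →
      ∀ n, 0 ≤ p n * (-Real.log (1 - Real.exp (z.1 + σ n * z.2))) := by
    intro z hlt n
    exact mul_nonneg (hp0 n) (le_trans (Real.exp_pos _).le
      (le_neg_log (Real.exp_pos _).le (Real.exp_lt_one_iff.2 (hlt n))))
  -- domain characterizations
  have domFD : {z : ℝ × ℝ | hFDe p σ z < ⊤} = Set.univ ×ˢ fDom p σ := by
    ext z
    simp only [Set.mem_setOf_eq, Set.mem_prod, Set.mem_univ, true_and]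
    have e1 : hFDe p σ z ≠ ⊤ ↔
        Summable (fun n => p n * Real.log (1 + Real.exp (z.1 + σ n * z.2))) :=
      tsum_ofReal_ne_top_iff fun n => mul_nonneg (hp0 n)
        (Real.log_nonneg (by linarith [Real.exp_pos (z.1 + σ n * z.2)]))
    rw [lt_top_iff_ne_top, e1, FD_summable_iff hp, summable_shift]
    exact Iff.rfl
  have domMB : {z : ℝ × ℝ | hMBe p σ z < ⊤} = Set.univ ×ˢ fDom p σ := by
    ext z
    simp only [Set.mem_setOf_eq, Set.mem_prod, Set.mem_univ, true_and]
    have e1 : hMBe p σ z ≠ ⊤ ↔ Summable (fun n => p n * Real.exp (z.1 + σ n * z.2)) :=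
      tsum_ofReal_ne_top_iff fun n => mul_nonneg (hp0 n) (Real.exp_pos _).le
    rw [lt_top_iff_ne_top, e1, summable_shift]
    exact Iff.rfl
  have domBE : {z : ℝ × ℝ | hBEe p σ z < ⊤} =
      {z : ℝ × ℝ | z.2 ∈ fDom p σ ∧ z.1 + sInf (Set.range σ) * z.2 < 0} := by
    ext z
    simp only [Set.mem_setOf_eq]
    constructor
    · intro hz
      have hlt : ∀ n, z.1 + σ n * z.2 < 0 := by
        intro n
        by_contra hcon
        have hle := ENNReal.le_tsum (f := fun n => if z.1 + σ n * z.2 < 0 then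
          ENNReal.ofReal (p n * (-Real.log (1 - Real.exp (z.1 + σ n * z.2)))) else ⊤) n
        rw [if_neg hcon] at hle
        exact hz.ne (top_le_iff.1 hle)
      have heq : hBEe p σ z =
          ∑' n, ENNReal.ofReal (p n * (-Real.log (1 - Real.exp (z.1 + σ n * z.2)))) :=
        tsum_congr fun n => if_pos (hlt n)
      rw [heq] at hz
      have hsumm := (tsum_ofReal_ne_top_iff (hnnBE z hlt)).1 hz.ne
      have hMBs : Summable (fun n => p n * Real.exp (z.1 + σ n * z.2)) :=
        Summable.of_nonneg_of_le (fun n => mul_nonneg (hp0 n) (Real.exp_pos _).le)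
          (fun n => mul_le_mul_of_nonneg_left
            (le_neg_log (Real.exp_pos _).le (Real.exp_lt_one_iff.2 (hlt n))) (hp0 n)) hsumm
      exact ⟨(summable_shift p σ z.1 z.2).1 hMBs, by rw [hsInf]; exact hlt m⟩
    · rintro ⟨hy, hθ⟩
      rw [hsInf] at hθ
      have hy0 : z.2 < 0 := fdom_neg hp hσpos hy
      have htle : ∀ n, z.1 + σ n * z.2 ≤ z.1 + σ m * z.2 := fun n => by
        linarith [mul_le_mul_of_nonpos_right (hm n) hy0.le]
      have hlt : ∀ n, z.1 + σ n * z.2 < 0 := fun n => lt_of_le_of_lt (htle n) hθ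
      have hS : Summable (fun n => p n * Real.exp (z.1 + σ n * z.2)) :=
        (summable_shift p σ z.1 z.2).2 hy
      have hεpos : 0 < 1 - Real.exp (z.1 + σ m * z.2) := by
        have := Real.exp_lt_one_iff.2 hθ; linarith
      have hsumm : Summable (fun n => p n * (-Real.log (1 - Real.exp (z.1 + σ n * z.2)))) := by
        refine Summable.of_nonneg_of_le (hnnBE z hlt) (fun n => ?_)
          (hS.mul_right (1 - Real.exp (z.1 + σ m * z.2))⁻¹)
        have hu1 : Real.exp (z.1 + σ n * z.2) < 1 := Real.exp_lt_one_iff.2 (hlt n)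
        have h1 := neg_log_le (Real.exp_pos (z.1 + σ n * z.2)).le hu1
        have hum : Real.exp (z.1 + σ n * z.2) ≤ Real.exp (z.1 + σ m * z.2) :=
          Real.exp_le_exp.2 (htle n)
        have h2 : Real.exp (z.1 + σ n * z.2) / (1 - Real.exp (z.1 + σ n * z.2)) ≤
            Real.exp (z.1 + σ n * z.2) * (1 - Real.exp (z.1 + σ m * z.2))⁻¹ := by
          rw [div_eq_mul_inv]
          refine mul_le_mul_of_nonneg_left ?_ (Real.exp_pos _).le
          exact inv_anti₀ hεpos (by linarith)
        calc p n * (-Real.log (1 - Real.exp (z.1 + σ n * z.2)))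
            ≤ p n * (Real.exp (z.1 + σ n * z.2) / (1 - Real.exp (z.1 + σ n * z.2))) :=
              mul_le_mul_of_nonneg_left h1 (hp0 n)
          _ ≤ p n * (Real.exp (z.1 + σ n * z.2) * (1 - Real.exp (z.1 + σ m * z.2))⁻¹) :=
              mul_le_mul_of_nonneg_left h2 (hp0 n)
          _ = (p n * Real.exp (z.1 + σ n * z.2)) * (1 - Real.exp (z.1 + σ m * z.2))⁻¹ := by
              ring
      have heq : hBEe p σ z =
          ∑' n, ENNReal.ofReal (p n * (-Real.log (1 - Real.exp (z.1 + σ n * z.2)))) :=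
        tsum_congr fun n => if_pos (hlt n)
      rw [heq, lt_top_iff_ne_top]
      exact (tsum_ofReal_ne_top_iff (hnnBE z hlt)).2 hsumm
  refine ⟨?_, domFD, domMB, domBE⟩
  intro h hh
  simp only [Set.mem_insert_iff, Set.mem_singleton_iff] at hh
  rcases hh with rfl | rfl | rfl
  · -- hMB
    refine ⟨fun z z' l h0 h1 => ?_, ?_, fun z => ?_⟩
    · exact tsum_conv (fun n w => ENNReal.ofReal (p n * Real.exp (w.1 + σ n * w.2)))
        (fun n => term_conv convexOn_exp (p n) (σ n) (hp0 n)) z z' l h0 h1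
    · refine lowerSemicontinuous_tsum fun n => Continuous.lowerSemicontinuous ?_
      exact ENNReal.continuous_ofReal.comp (by fun_prop)
    · refine lt_of_lt_of_le ?_ (ENNReal.le_tsum 0)
      exact ENNReal.ofReal_pos.2
        (mul_pos (lt_of_lt_of_le one_pos (hp 0)) (Real.exp_pos _))
  · -- hFD
    refine ⟨fun z z' l h0 h1 => ?_, ?_, fun z => ?_⟩
    · exact tsum_conv
        (fun n w => ENNReal.ofReal (p n * Real.log (1 + Real.exp (w.1 + σ n * w.2))))
        (fun n => term_conv convexOn_FD (p n) (σ n) (hp0 n)) z z' l h0 h1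
    · refine lowerSemicontinuous_tsum fun n => Continuous.lowerSemicontinuous ?_
      have h1 : Continuous fun z : ℝ × ℝ => 1 + Real.exp (z.1 + σ n * z.2) := by fun_prop
      exact ENNReal.continuous_ofReal.comp
        (continuous_const.mul (h1.log fun z => by positivity))
    · refine lt_of_lt_of_le ?_ (ENNReal.le_tsum 0)
      refine ENNReal.ofReal_pos.2 (mul_pos (lt_of_lt_of_le one_pos (hp 0)) ?_)
      exact Real.log_pos (by linarith [Real.exp_pos (z.1 + σ 0 * z.2)])
  · -- hBE
    refine ⟨fun z z' l h0 h1 => ?_, ?_, fun z => ?_⟩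
    · rw [hBErepr, hBErepr, hBErepr]
      exact tsum_conv (fun n w => ∑' k : ℕ,
          ENNReal.ofReal ((p n / ((k : ℝ) + 1)) * Real.exp (((k : ℝ) + 1) * (w.1 + σ n * w.2))))
        (fun n => tsum_conv (fun (k : ℕ) (w : ℝ × ℝ) =>
            ENNReal.ofReal ((p n / ((k : ℝ) + 1)) * Real.exp (((k : ℝ) + 1) * (w.1 + σ n * w.2))))
          (fun k => term_conv (convexOn_exp_mul ((k : ℝ) + 1)) (p n / ((k : ℝ) + 1)) (σ n)
            (div_nonneg (hp0 n) (by positivity)))) z z' l h0 h1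
    · have hrw : hBEe p σ = fun z : ℝ × ℝ => ∑' n, ∑' k : ℕ,
          ENNReal.ofReal ((p n / ((k : ℝ) + 1)) * Real.exp (((k : ℝ) + 1) * (z.1 + σ n * z.2))) :=
        funext hBErepr
      rw [hrw]
      refine lowerSemicontinuous_tsum fun n => lowerSemicontinuous_tsum fun k =>
        Continuous.lowerSemicontinuous ?_
      exact ENNReal.continuous_ofReal.comp (by fun_prop)
    · rw [hBErepr z]
      refine lt_of_lt_of_le (lt_of_lt_of_le ?_ (ENNReal.le_tsum 0)) (ENNReal.le_tsum 0)
      refine ENNReal.ofReal_pos.2 (mul_pos (div_pos (lt_of_lt_of_le one_pos (hp 0))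
        (by norm_num)) (Real.exp_pos _))
end

section
/- Let (p_n)_{n≥1} ⊆ [1,∞) and (σ_n)_{n≥1} ⊆ ℝ. Let (x,y) ∈ ℝ² satisfy x + σ_n y < 0 for all n ≥ 1, and suppose the series Σ_{n≥1} p_n (e^{x+σ_n y}/(1−e^{x+σ_n y}))·(1,σ_n) converges in ℝ² with sum (u,v). Then the problem of minimizing Σ_{n≥1} p_n E_BE(u_n/p_n) over all sequences (u_n)_{n≥1} of nonnegative reals with Σ_{n≥1} u_n = u and Σ_{n≥1} σ_n u_n = v has the unique optimal solution ū_n := p_n e^{x+σ_n y}/(1−e^{x+σ_n y}) (n ≥ 1), and the optimal value equals h_BE*(u,v); that is, H_BE(u,v) = h_BE*(u,v) and the infimum defining H_BE(u,v) is attained exactly at (ū_n)_{n≥1}. -/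
open Filter

/-- The Bose–Einstein entropy, with values in `ℝ ∪ {+∞}`. -/
noncomputable def EBEe (u : ℝ) : EReal :=
  if 0 ≤ u then ((u * Real.log u - (1 + u) * Real.log (1 + u) : ℝ) : EReal) else ⊤

/-- The Maxwell–Boltzmann entropy, with values in `ℝ ∪ {+∞}`. -/
noncomputable def EMBe (u : ℝ) : EReal :=
  if 0 ≤ u then ((u * (Real.log u - 1) : ℝ) : EReal) else ⊤

/-- The Fermi–Dirac entropy, with values in `ℝ ∪ {+∞}`. -/
noncomputable def EFDe (u : ℝ) : EReal :=
  if 0 ≤ u ∧ u ≤ 1 then ((u * Real.log u + (1 - u) * Real.log (1 - u) : ℝ) : EReal) else ⊤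

/-- The sum of a series in `ℝ ∪ {±∞}`, following the paper's convention: the limit of the
partial sums when this limit exists in `[−∞,+∞]`, and `+∞` otherwise. -/
noncomputable def serSum (β : ℕ → EReal) : EReal :=
  @dite _ (∃ l : EReal, Tendsto (fun N => ∑ k ∈ Finset.range N, β k) atTop (nhds l))
    (Classical.dec _) (fun h => h.choose) (fun _ => ⊤)

/-- `S(u,v)`: the set of sequences of nonnegative reals with `Σ u_n = u` and `Σ σ_n u_n = v`
(sums as limits of partial sums). -/
def Sfeas (σ : ℕ → ℝ) (u v : ℝ) : Set (ℕ → ℝ) :=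
  {w | (∀ n, 0 ≤ w n) ∧
    Tendsto (fun N => ∑ k ∈ Finset.range N, w k) atTop (nhds u) ∧
    Tendsto (fun N => ∑ k ∈ Finset.range N, σ k * w k) atTop (nhds v)}

/-- The value (marginal) function `H_W(u,v) = inf { Σ p_n W(u_n/p_n) : (u_n) ∈ S(u,v) }`,
with `inf ∅ = +∞`. -/
noncomputable def Hval (p σ : ℕ → ℝ) (W : ℝ → EReal) (u v : ℝ) : EReal :=
  sInf ((fun w => serSum fun n => (p n : EReal) * W (w n / p n)) '' Sfeas σ u v)
open scoped ENNReal

/-- The Fenchel conjugate `h_BE^*(u,v) = sup_{(x,y)} (ux + vy − h_BE(x,y))`. -/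
noncomputable def hBEstar (p σ : ℕ → ℝ) (u v : ℝ) : EReal :=
  ⨆ z : ℝ × ℝ, (((u * z.1 + v * z.2 : ℝ) : EReal) - ((hBEe p σ z : ℝ≥0∞) : EReal))

/-- The candidate optimal solution `ū_n = p_n e^{x+σ_n y}/(1−e^{x+σ_n y})`. -/
noncomputable def uBarBE (p σ : ℕ → ℝ) (x y : ℝ) (n : ℕ) : ℝ :=
  p n * (Real.exp (x + σ n * y) / (1 - Real.exp (x + σ n * y)))

section Aux

open Filter

/-- The real-valued Bose–Einstein entropy on `[0,∞)`. -/
noncomputable def EBEr (q : ℝ) : ℝ := q * Real.log q - (1 + q) * Real.log (1 + q)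

lemma EBEe_eq_coe {q : ℝ} (hq : 0 ≤ q) : EBEe q = ((EBEr q : ℝ) : EReal) := by
  rw [EBEe, if_pos hq]; rfl

/-- Pointwise Fenchel inequality with equality case. -/
lemma EBE_key (w s : ℝ) (hw : 0 ≤ w) (hs0 : 0 < s) (hs1 : s < 1) :
    w * Real.log s + Real.log (1 - s) ≤ EBEr w ∧
    (EBEr w = w * Real.log s + Real.log (1 - s) → w = s / (1 - s)) := by
  have h1s : 0 < 1 - s := by linarith
  rcases eq_or_lt_of_le hw with h0 | hwpos
  · -- w = 0
    subst h0  -- ??? h0 : 0 = w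
    constructor
    · simp only [EBEr, zero_mul, zero_add, add_zero, one_mul]
      have := Real.log_nonpos h1s.le (by linarith)
      simp [Real.log_one]
      linarith [this]
    · intro h
      exfalso
      simp only [EBEr, zero_mul, zero_add, add_zero, one_mul, Real.log_one] at h
      have h2 : Real.log (1 - s) = 0 := by linarith
      rcases Real.log_eq_zero.1 h2 with h' | h' | h' <;> nlinarith
  · -- 0 < w
    have h1w : (0 : ℝ) < 1 + w := by linarith
    have hY : 0 < (1 + w) * s / w := by positivity
    have hX : 0 < (1 + w) * (1 - s) := by positivity
    have e1 : Real.log ((1 + w) * s / w) ≤ (1 + w) * s / w - 1 :=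
      Real.log_le_sub_one_of_pos hY
    have e1' : w * Real.log ((1 + w) * s / w) ≤ (1 + w) * s - w := by
      have := mul_le_mul_of_nonneg_left e1 hw
      calc w * Real.log ((1 + w) * s / w) ≤ w * ((1 + w) * s / w - 1) := this
        _ = (1 + w) * s - w := by field_simp
    have e2 : Real.log ((1 + w) * (1 - s)) ≤ (1 + w) * (1 - s) - 1 :=
      Real.log_le_sub_one_of_pos hX
    have l1 : Real.log ((1 + w) * s / w)
        = Real.log (1 + w) + Real.log s - Real.log w := by
      rw [Real.log_div (by positivity) hwpos.ne', Real.log_mul h1w.ne' hs0.ne']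
    have l2 : Real.log ((1 + w) * (1 - s)) = Real.log (1 + w) + Real.log (1 - s) :=
      Real.log_mul h1w.ne' h1s.ne'
    rw [l1] at e1'
    rw [l2] at e2
    constructor
    · simp only [EBEr]; nlinarith
    · intro heq
      simp only [EBEr] at heq
      have hXeq : (1 + w) * (1 - s) = 1 := by
        by_contra hne
        have e2' : Real.log ((1 + w) * (1 - s)) < (1 + w) * (1 - s) - 1 :=
          Real.log_lt_sub_one_of_pos hX hne
        rw [l2] at e2'
        nlinarith
      have : w * (1 - s) = s := by nlinarith
      field_simp
      linarith [this]

lemma EBE_bar (s : ℝ) (hs0 : 0 < s) (hs1 : s < 1) :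
    EBEr (s / (1 - s)) = (s / (1 - s)) * Real.log s + Real.log (1 - s) := by
  have h1s : 0 < 1 - s := by linarith
  have hw : 0 < s / (1 - s) := by positivity
  have l1 : Real.log (s / (1 - s)) = Real.log s - Real.log (1 - s) :=
    Real.log_div hs0.ne' h1s.ne'
  have h2 : (1 : ℝ) + s / (1 - s) = (1 - s)⁻¹ := by field_simp; ring
  have l2 : Real.log (1 + s / (1 - s)) = -Real.log (1 - s) := by
    rw [h2, Real.log_inv]
  simp only [EBEr, l1, l2]
  ring

lemma ereal_coe_sum (f : ℕ → ℝ) (N : ℕ) :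
    ((∑ k ∈ Finset.range N, f k : ℝ) : EReal) = ∑ k ∈ Finset.range N, ((f k : ℝ) : EReal) := by
  induction N with
  | zero => simp
  | succ n ih => rw [Finset.sum_range_succ, Finset.sum_range_succ, EReal.coe_add, ih]

lemma serSum_coe_eq {f : ℕ → ℝ} {L : ℝ}
    (h : Tendsto (fun N => ∑ k ∈ Finset.range N, f k) atTop (nhds L)) :
    serSum (fun n => ((f n : ℝ) : EReal)) = (L : EReal) := by
  have hE : Tendsto (fun N => ∑ k ∈ Finset.range N, ((f k : ℝ) : EReal)) atTop
      (nhds (L : EReal)) := by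
    simp only [← ereal_coe_sum]
    exact EReal.tendsto_coe.2 h
  have hex : ∃ l : EReal, Tendsto (fun N => ∑ k ∈ Finset.range N, ((f k : ℝ) : EReal)) atTop
      (nhds l) := ⟨_, hE⟩
  rw [serSum, dif_pos hex]
  exact tendsto_nhds_unique hex.choose_spec hE

lemma le_serSum_coe {f g : ℕ → ℝ} {C : ℝ}
    (hle : ∀ n, g n ≤ f n)
    (hg : Tendsto (fun N => ∑ k ∈ Finset.range N, g k) atTop (nhds C)) :
    (C : EReal) ≤ serSum (fun n => ((f n : ℝ) : EReal)) := by
  rw [serSum]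
  split_ifs with hex
  · refine le_of_tendsto_of_tendsto'
      (EReal.tendsto_coe.2 hg : Tendsto (fun N => ((∑ k ∈ Finset.range N, g k : ℝ) : EReal))
        atTop _) hex.choose_spec fun N => ?_
    rw [← ereal_coe_sum]
    exact_mod_cast Finset.sum_le_sum fun k _ => hle k
  · exact le_top

lemma serSum_coe_tendsto {f : ℕ → ℝ} {L : ℝ}
    (h : serSum (fun n => ((f n : ℝ) : EReal)) = (L : EReal)) :
    Tendsto (fun N => ∑ k ∈ Finset.range N, f k) atTop (nhds L) := by
  rw [serSum] at h
  split_ifs at h with hex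
  · have hspec := hex.choose_spec
    rw [h] at hspec
    rw [← EReal.tendsto_coe]
    simpa only [ereal_coe_sum] using hspec
  · exact absurd h (EReal.top_ne_coe L)

lemma sumG_tendsto (p σ : ℕ → ℝ) (x y u v A : ℝ) (w : ℕ → ℝ)
    (hwu : Tendsto (fun N => ∑ k ∈ Finset.range N, w k) atTop (nhds u))
    (hwv : Tendsto (fun N => ∑ k ∈ Finset.range N, σ k * w k) atTop (nhds v))
    (hA : Tendsto (fun N => ∑ k ∈ Finset.range N,
        p k * Real.log (1 - Real.exp (x + σ k * y))) atTop (nhds (-A))) :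
    Tendsto (fun N => ∑ k ∈ Finset.range N,
        (w k * (x + σ k * y) + p k * Real.log (1 - Real.exp (x + σ k * y)))) atTop
      (nhds (u * x + v * y - A)) := by
  have h1 := (hwu.const_mul x).add ((hwv.const_mul y).add hA)
  have heq : ∀ N, x * (∑ k ∈ Finset.range N, w k)
      + (y * (∑ k ∈ Finset.range N, σ k * w k)
        + ∑ k ∈ Finset.range N, p k * Real.log (1 - Real.exp (x + σ k * y)))
      = ∑ k ∈ Finset.range N,
        (w k * (x + σ k * y) + p k * Real.log (1 - Real.exp (x + σ k * y))) := by
    intro N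
    rw [Finset.mul_sum, Finset.mul_sum, ← Finset.sum_add_distrib, ← Finset.sum_add_distrib]
    exact Finset.sum_congr rfl fun k _ => by ring
  have hlim : x * u + (y * v + -A) = u * x + v * y - A := by ring
  rw [← hlim]
  exact Tendsto.congr heq h1

end Aux

lemma hfun_eq (p : ℕ → ℝ) (hp : ∀ n, 1 ≤ p n) (w : ℕ → ℝ) (hw0 : ∀ n, 0 ≤ w n) :
    (fun n => (p n : EReal) * EBEe (w n / p n))
      = fun n => ((p n * EBEr (w n / p n) : ℝ) : EReal) := by
  funext n
  have hp0 : (0 : ℝ) < p n := lt_of_lt_of_le one_pos (hp n)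
  rw [EBEe_eq_coe (div_nonneg (hw0 n) hp0.le), ← EReal.coe_mul]

lemma weak_duality (p σ : ℕ → ℝ) (hp : ∀ n, 1 ≤ p n) (u v : ℝ) (w : ℕ → ℝ)
    (hw : w ∈ Sfeas σ u v) (z : ℝ × ℝ) :
    ((u * z.1 + v * z.2 : ℝ) : EReal) - ((hBEe p σ z : ℝ≥0∞) : EReal)
      ≤ serSum (fun n => (p n : EReal) * EBEe (w n / p n)) := by
  obtain ⟨hw0, hwu, hwv⟩ := hw
  have hp0 : ∀ n, (0 : ℝ) < p n := fun n => lt_of_lt_of_le one_pos (hp n)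
  have hq0 : ∀ n, 0 ≤ w n / p n := fun n => div_nonneg (hw0 n) (hp0 n).le
  rw [hfun_eq p hp w hw0]
  by_cases hz : hBEe p σ z = ⊤
  · rw [hz]
    simp only [EReal.coe_ennreal_top, EReal.sub_top]
    exact bot_le
  · have hzneg : ∀ n, z.1 + σ n * z.2 < 0 := by
      by_contra hcon
      push_neg at hcon
      obtain ⟨n, hn⟩ := hcon
      apply hz
      have hle : (⊤ : ℝ≥0∞) ≤ hBEe p σ z := by
        rw [hBEe]
        have := ENNReal.le_tsum (f := fun n => if z.1 + σ n * z.2 < 0 then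
          ENNReal.ofReal (p n * (-Real.log (1 - Real.exp (z.1 + σ n * z.2)))) else ⊤) n
        rwa [if_neg (not_lt.2 hn)] at this
      exact top_le_iff.1 hle
    have hs0 : ∀ n, 0 < Real.exp (z.1 + σ n * z.2) := fun n => Real.exp_pos _
    have hs1 : ∀ n, Real.exp (z.1 + σ n * z.2) < 1 := fun n =>
      Real.exp_lt_one_iff.2 (hzneg n)
    set a' : ℕ → ℝ := fun n => p n * (-Real.log (1 - Real.exp (z.1 + σ n * z.2))) with ha'def
    have ha'0 : ∀ n, 0 ≤ a' n := fun n =>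
      mul_nonneg (hp0 n).le (neg_nonneg.2 (Real.log_nonpos (by linarith [hs0 n, hs1 n])
        (by linarith [hs0 n])))
    have hBz : hBEe p σ z = ∑' n, ENNReal.ofReal (a' n) := by
      rw [hBEe]
      exact tsum_congr fun n => by rw [if_pos (hzneg n)]
    have hsum' : Summable a' := by
      have h1 : Summable (fun n => (ENNReal.ofReal (a' n)).toReal) :=
        ENNReal.summable_toReal (by rw [← hBz]; exact hz)
      exact h1.congr fun n => ENNReal.toReal_ofReal (ha'0 n)
    have hA'0 : 0 ≤ ∑' n, a' n := tsum_nonneg ha'0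
    have hBz' : hBEe p σ z = ENNReal.ofReal (∑' n, a' n) := by
      rw [hBz, ENNReal.ofReal_tsum_of_nonneg ha'0 hsum']
    have hcoe : ((hBEe p σ z : ℝ≥0∞) : EReal) = ((∑' n, a' n : ℝ) : EReal) := by
      rw [hBz', EReal.coe_ennreal_ofReal, max_eq_left hA'0]
    rw [hcoe, ← EReal.coe_sub]
    have hgA : Tendsto (fun N => ∑ k ∈ Finset.range N,
        p k * Real.log (1 - Real.exp (z.1 + σ k * z.2))) atTop (nhds (-(∑' n, a' n))) := by
      have h2 := hsum'.hasSum.tendsto_sum_nat.neg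
      refine Tendsto.congr (fun N => ?_) h2
      rw [← Finset.sum_neg_distrib]
      exact Finset.sum_congr rfl fun k _ => by simp only [ha'def]; ring
    have hG := sumG_tendsto p σ z.1 z.2 u v (∑' n, a' n) w hwu hwv hgA
    refine le_serSum_coe (fun n => ?_) hG
    have hk := (EBE_key (w n / p n) (Real.exp (z.1 + σ n * z.2)) (hq0 n) (hs0 n) (hs1 n)).1
    have hk' := mul_le_mul_of_nonneg_left hk (hp0 n).le
    calc w n * (z.1 + σ n * z.2) + p n * Real.log (1 - Real.exp (z.1 + σ n * z.2))
        = p n * ((w n / p n) * Real.log (Real.exp (z.1 + σ n * z.2))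
            + Real.log (1 - Real.exp (z.1 + σ n * z.2))) := by
          have hpn : p n ≠ 0 := (hp0 n).ne'
          rw [Real.log_exp]
          field_simp
      _ ≤ p n * EBEr (w n / p n) := hk'

theorem stmt15 (p σ : ℕ → ℝ) (hp : ∀ n, 1 ≤ p n) (x y : ℝ)
    (hneg : ∀ n, x + σ n * y < 0) (u v : ℝ)
    (hconv : Tendsto (fun N => ∑ k ∈ Finset.range N,
        (p k * (Real.exp (x + σ k * y) / (1 - Real.exp (x + σ k * y)))) • ((1 : ℝ), σ k))
      atTop (nhds (u, v))) :
    uBarBE p σ x y ∈ Sfeas σ u v ∧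
    serSum (fun n => (p n : EReal) * EBEe (uBarBE p σ x y n / p n)) = hBEstar p σ u v ∧
    Hval p σ EBEe u v = hBEstar p σ u v ∧
    (∀ w ∈ Sfeas σ u v,
      hBEstar p σ u v ≤ serSum fun n => (p n : EReal) * EBEe (w n / p n)) ∧
    (∀ w ∈ Sfeas σ u v,
      serSum (fun n => (p n : EReal) * EBEe (w n / p n)) = hBEstar p σ u v →
        w = uBarBE p σ x y) := by
  have hp0 : ∀ n, (0 : ℝ) < p n := fun n => lt_of_lt_of_le one_pos (hp n)
  have hs0 : ∀ n, 0 < Real.exp (x + σ n * y) := fun n => Real.exp_pos _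
  have hs1 : ∀ n, Real.exp (x + σ n * y) < 1 := fun n => Real.exp_lt_one_iff.2 (hneg n)
  have hc0 : ∀ n, 0 ≤ uBarBE p σ x y n := fun n => mul_nonneg (hp0 n).le
    (div_nonneg (hs0 n).le (by linarith [hs1 n]))
  -- feasibility
  have hcu : Tendsto (fun N => ∑ k ∈ Finset.range N, uBarBE p σ x y k) atTop (nhds u) := by
    have h1 := (continuous_fst.tendsto ((u, v) : ℝ × ℝ)).comp hconv
    simp only [Function.comp_def, Prod.fst_sum, Prod.smul_fst, smul_eq_mul, mul_one] at h1
    exact h1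
  have hcv : Tendsto (fun N => ∑ k ∈ Finset.range N, σ k * uBarBE p σ x y k) atTop
      (nhds v) := by
    have h2 := (continuous_snd.tendsto ((u, v) : ℝ × ℝ)).comp hconv
    simp only [Function.comp_def, Prod.snd_sum, Prod.smul_snd, smul_eq_mul] at h2
    exact Tendsto.congr (fun N => Finset.sum_congr rfl fun k _ => mul_comm _ _) h2
  have hfeas : uBarBE p σ x y ∈ Sfeas σ u v := ⟨hc0, hcu, hcv⟩
  -- summability of the dual series at (x,y)
  have hmono : Monotone (fun N => ∑ k ∈ Finset.range N, uBarBE p σ x y k) := by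
    apply monotone_nat_of_le_succ
    intro n
    rw [Finset.sum_range_succ]
    linarith [hc0 n]
  have hble : ∀ N, ∑ k ∈ Finset.range N, uBarBE p σ x y k ≤ u :=
    fun N => hmono.ge_of_tendsto hcu N
  have hsumc : Summable (uBarBE p σ x y) := summable_of_sum_range_le hc0 hble
  set a : ℕ → ℝ := fun n => p n * (-Real.log (1 - Real.exp (x + σ n * y))) with hadef
  have ha0 : ∀ n, 0 ≤ a n := fun n =>
    mul_nonneg (hp0 n).le (neg_nonneg.2 (Real.log_nonpos (by linarith [hs0 n, hs1 n])
      (by linarith [hs0 n])))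
  have hac : ∀ n, a n ≤ uBarBE p σ x y n := by
    intro n
    have h1s : (0 : ℝ) < 1 - Real.exp (x + σ n * y) := by linarith [hs1 n]
    have h := Real.log_le_sub_one_of_pos (x := (1 - Real.exp (x + σ n * y))⁻¹) (by positivity)
    rw [Real.log_inv] at h
    have h2 : (1 - Real.exp (x + σ n * y))⁻¹ - 1
        = Real.exp (x + σ n * y) / (1 - Real.exp (x + σ n * y)) := by
      field_simp
      ring
    have h3 : -Real.log (1 - Real.exp (x + σ n * y))
        ≤ Real.exp (x + σ n * y) / (1 - Real.exp (x + σ n * y)) := by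
      rw [← h2]; exact h
    exact mul_le_mul_of_nonneg_left h3 (hp0 n).le
  have hsuma : Summable a := Summable.of_nonneg_of_le ha0 hac hsumc
  have hA0 : 0 ≤ ∑' n, a n := tsum_nonneg ha0
  have hBxy : hBEe p σ (x, y) = ENNReal.ofReal (∑' n, a n) := by
    rw [hBEe, ENNReal.ofReal_tsum_of_nonneg ha0 hsuma]
    exact tsum_congr fun n => by rw [if_pos (hneg n)]
  have hgA : Tendsto (fun N => ∑ k ∈ Finset.range N,
      p k * Real.log (1 - Real.exp (x + σ k * y))) atTop (nhds (-(∑' n, a n))) := by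
    have h2 := hsuma.hasSum.tendsto_sum_nat.neg
    refine Tendsto.congr (fun N => ?_) h2
    rw [← Finset.sum_neg_distrib]
    exact Finset.sum_congr rfl fun k _ => by simp only [hadef]; ring
  -- the value of the primal at uBar
  have hterm : ∀ n, p n * EBEr (uBarBE p σ x y n / p n)
      = uBarBE p σ x y n * (x + σ n * y)
        + p n * Real.log (1 - Real.exp (x + σ n * y)) := by
    intro n
    have hq : uBarBE p σ x y n / p n
        = Real.exp (x + σ n * y) / (1 - Real.exp (x + σ n * y)) :=
      mul_div_cancel_left₀ _ (hp0 n).ne'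
    rw [hq, EBE_bar _ (hs0 n) (hs1 n), Real.log_exp]
    simp only [uBarBE]
    ring
  have hGbar := sumG_tendsto p σ x y u v (∑' n, a n) (uBarBE p σ x y) hcu hcv hgA
  have hserU : serSum (fun n => (p n : EReal) * EBEe (uBarBE p σ x y n / p n))
      = ((u * x + v * y - ∑' n, a n : ℝ) : EReal) := by
    rw [hfun_eq p hp _ hc0]
    apply serSum_coe_eq
    exact Tendsto.congr (fun N => Finset.sum_congr rfl fun k _ => (hterm k).symm) hGbar
  -- the dual optimal value
  have hstar : hBEstar p σ u v = ((u * x + v * y - ∑' n, a n : ℝ) : EReal) := by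
    apply le_antisymm
    · rw [hBEstar]
      apply iSup_le
      intro z
      calc ((u * z.1 + v * z.2 : ℝ) : EReal) - ((hBEe p σ z : ℝ≥0∞) : EReal)
          ≤ serSum (fun n => (p n : EReal) * EBEe (uBarBE p σ x y n / p n)) :=
            weak_duality p σ hp u v _ hfeas z
        _ = _ := hserU
    · have hval : (((u * (x, y).1 + v * (x, y).2 : ℝ) : EReal)
          - ((hBEe p σ (x, y) : ℝ≥0∞) : EReal))
          = ((u * x + v * y - ∑' n, a n : ℝ) : EReal) := by
        rw [hBxy, EReal.coe_ennreal_ofReal, max_eq_left hA0, ← EReal.coe_sub]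
      rw [hBEstar, ← hval]
      exact le_iSup (fun z : ℝ × ℝ =>
        (((u * z.1 + v * z.2 : ℝ) : EReal) - ((hBEe p σ z : ℝ≥0∞) : EReal))) ((x, y) : ℝ × ℝ)
  have hpart2 : serSum (fun n => (p n : EReal) * EBEe (uBarBE p σ x y n / p n))
      = hBEstar p σ u v := hserU.trans hstar.symm
  have hpart4 : ∀ w ∈ Sfeas σ u v,
      hBEstar p σ u v ≤ serSum fun n => (p n : EReal) * EBEe (w n / p n) := by
    intro w hw
    rw [hBEstar]
    exact iSup_le fun z => weak_duality p σ hp u v w hw z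
  refine ⟨hfeas, hpart2, ?_, hpart4, ?_⟩
  · -- Hval
    apply le_antisymm
    · have hmem : hBEstar p σ u v
          ∈ (fun w => serSum fun n => (p n : EReal) * EBEe (w n / p n)) '' Sfeas σ u v :=
        ⟨uBarBE p σ x y, hfeas, hpart2⟩
      exact sInf_le hmem
    · refine le_sInf ?_
      rintro b ⟨w, hw, rfl⟩
      exact hpart4 w hw
  · -- uniqueness
    intro w hw heq
    obtain ⟨hw0, hwu, hwv⟩ := hw
    rw [hfun_eq p hp w hw0, hstar] at heq
    have hF := serSum_coe_tendsto heq
    have hG := sumG_tendsto p σ x y u v (∑' n, a n) w hwu hwv hgA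
    set d : ℕ → ℝ := fun n => p n * EBEr (w n / p n)
      - (w n * (x + σ n * y) + p n * Real.log (1 - Real.exp (x + σ n * y))) with hddef
    have hq0 : ∀ n, 0 ≤ w n / p n := fun n => div_nonneg (hw0 n) (hp0 n).le
    have hglef : ∀ n, w n * (x + σ n * y) + p n * Real.log (1 - Real.exp (x + σ n * y))
        ≤ p n * EBEr (w n / p n) := by
      intro n
      have hk := (EBE_key (w n / p n) (Real.exp (x + σ n * y)) (hq0 n) (hs0 n) (hs1 n)).1
      have hk' := mul_le_mul_of_nonneg_left hk (hp0 n).le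
      calc w n * (x + σ n * y) + p n * Real.log (1 - Real.exp (x + σ n * y))
          = p n * ((w n / p n) * Real.log (Real.exp (x + σ n * y))
              + Real.log (1 - Real.exp (x + σ n * y))) := by
            have hpn : p n ≠ 0 := (hp0 n).ne'
            rw [Real.log_exp]
            field_simp
        _ ≤ p n * EBEr (w n / p n) := hk'
    have hd0 : ∀ n, 0 ≤ d n := fun n => sub_nonneg.2 (hglef n)
    have hD : Tendsto (fun N => ∑ k ∈ Finset.range N, d k) atTop (nhds 0) := by
      have h3 := hF.sub hG
      rw [sub_self] at h3
      refine Tendsto.congr (fun N => ?_) h3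
      rw [← Finset.sum_sub_distrib]
    have hDmono : Monotone (fun N => ∑ k ∈ Finset.range N, d k) := by
      apply monotone_nat_of_le_succ
      intro n
      rw [Finset.sum_range_succ]
      linarith [hd0 n]
    have hDle : ∀ N, ∑ k ∈ Finset.range N, d k ≤ 0 := fun N => hDmono.ge_of_tendsto hD N
    have hdz : ∀ n, d n = 0 := by
      intro n
      have h1 := hDle (n + 1)
      have h2 : 0 ≤ ∑ k ∈ Finset.range n, d k := Finset.sum_nonneg fun k _ => hd0 k
      rw [Finset.sum_range_succ] at h1
      exact le_antisymm (by linarith) (hd0 n)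
    funext n
    have heqn : p n * EBEr (w n / p n)
        = p n * ((w n / p n) * Real.log (Real.exp (x + σ n * y))
            + Real.log (1 - Real.exp (x + σ n * y))) := by
      have h4 := hdz n
      rw [hddef] at h4
      have h5 : p n * EBEr (w n / p n)
          = w n * (x + σ n * y) + p n * Real.log (1 - Real.exp (x + σ n * y)) := by
        have := sub_eq_zero.1 h4
        exact this
      have hpn : p n ≠ 0 := (hp0 n).ne'
      rw [h5, Real.log_exp]
      field_simp
    have heqn' : EBEr (w n / p n)
        = (w n / p n) * Real.log (Real.exp (x + σ n * y))
            + Real.log (1 - Real.exp (x + σ n * y)) :=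
      mul_left_cancel₀ (hp0 n).ne' heqn
    have hqeq := (EBE_key (w n / p n) (Real.exp (x + σ n * y)) (hq0 n) (hs0 n) (hs1 n)).2 heqn'
    have : w n = p n * (Real.exp (x + σ n * y) / (1 - Real.exp (x + σ n * y))) := by
      have hpn : p n ≠ 0 := (hp0 n).ne'
      rw [← hqeq]
      field_simp
    rw [this]
    rfl
end

section
/- Let (p_n)_{n≥1} ⊆ [1,∞) and (σ_n)_{n≥1} ⊆ (0,∞) with σ_n → ∞; assume dom f ≠ ∅ where f(y) := Σ_{n≥1} p_n e^{σ_n y}, and let α ∈ [0,∞) satisfy I := (−∞,−α) ⊆ dom f ⊆ (−∞,−α]. Set h(x,y) := e^x f(y), θ_1 := min_n σ_n, and θ_2 := lim_{y↑−α} f'(y)/f(y) ∈ (θ_1, ∞]. Then: (i) h is differentiable at every (x,y) ∈ ℝ × I with ∇h(x,y) = Σ_{n≥1} p_n e^{x+σ_n y}·(1,σ_n), and ∇h(ℝ × I) = {(u,v) ∈ ℝ² : u > 0, θ_1 u < v < θ_2 u}. (ii) θ_2 < ∞ iff (−α ∈ dom f and γ := Σ_{n≥1} p_n σ_n e^{−σ_n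 α} < ∞). (iii) If −α ∈ dom f and γ < ∞, then for every x ∈ ℝ the series Σ_{n≥1} p_n e^{x−σ_n α}·(1,σ_n) converges to e^x·(f(−α), γ) and ∂h(x,−α) = {e^x f(−α)} × [e^x γ, ∞). -/
open Filter
open scoped ENNReal

/-- The subdifferential of a function `g : ℝ² → ℝ ∪ {±∞}` at a point `z`. -/
def subd2 (g : ℝ × ℝ → EReal) (z : ℝ × ℝ) : Set (ℝ × ℝ) :=
  {w : ℝ × ℝ | ∀ z' : ℝ × ℝ,
    g z + ((w.1 * (z'.1 - z.1) + w.2 * (z'.2 - z.2) : ℝ) : EReal) ≤ g z'}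

/-- The continuous linear map `ℝ² → ℝ` given by the gradient `(a,b)`. -/
noncomputable def gradCLM (a b : ℝ) : (ℝ × ℝ) →L[ℝ] ℝ :=
  a • ContinuousLinearMap.fst ℝ ℝ ℝ + b • ContinuousLinearMap.snd ℝ ℝ ℝ



section Aux
variable {p σ : ℕ → ℝ}

lemma texp_le {t δ : ℝ} (ht : 0 ≤ t) (hδ : 0 < δ) : t * Real.exp (-(t * δ)) ≤ 1 / δ := by
  have h1 : t * δ ≤ Real.exp (t * δ) := le_trans (by linarith) (Real.add_one_le_exp _)
  have h2 : Real.exp (-(t * δ)) * Real.exp (t * δ) = 1 := by rw [← Real.exp_add]; simp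
  have h3 : (0:ℝ) < Real.exp (-(t * δ)) := Real.exp_pos _
  rw [le_div_iff₀ hδ]
  nlinarith [mul_le_mul_of_nonneg_left h1 h3.le]

lemma summable_a_of_lt (hp : ∀ n, 1 ≤ p n) (hσpos : ∀ n, 0 < σ n)
    {y y' : ℝ} (hyy' : y ≤ y') (hs : Summable fun n => p n * Real.exp (σ n * y')) :
    Summable fun n => p n * Real.exp (σ n * y) := by
  refine hs.of_nonneg_of_le (fun n => by have h0 : (0:ℝ) ≤ p n := le_trans zero_le_one (hp n); have h1 := (hσpos n).le; positivity) (fun n => ?_)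
  have h0 : (0:ℝ) ≤ p n := le_trans zero_le_one (hp n)
  exact mul_le_mul_of_nonneg_left (Real.exp_le_exp.2 (by nlinarith [(hσpos n).le])) h0

lemma summable_b_of_lt (hp : ∀ n, 1 ≤ p n) (hσpos : ∀ n, 0 < σ n)
    {y y' : ℝ} (hyy' : y < y') (hs : Summable fun n => p n * Real.exp (σ n * y')) :
    Summable fun n => p n * σ n * Real.exp (σ n * y) := by
  set δ := y' - y with hδdef
  have hδ : 0 < δ := by simp [hδdef]; linarith
  refine ((hs.mul_left (1/δ)).of_nonneg_of_le (fun n => by have h0 : (0:ℝ) ≤ p n := le_trans zero_le_one (hp n); have h1 := (hσpos n).le; positivity) (fun n => ?_))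
  have h0 : (0:ℝ) ≤ p n := le_trans zero_le_one (hp n)
  have : σ n * y = σ n * y' + (-(σ n * δ)) := by simp [hδdef]; ring
  rw [this, Real.exp_add]
  have hb : σ n * Real.exp (-(σ n * δ)) ≤ 1/δ := texp_le (hσpos n).le hδ
  calc p n * σ n * (Real.exp (σ n * y') * Real.exp (-(σ n * δ)))
      = (σ n * Real.exp (-(σ n * δ))) * (p n * Real.exp (σ n * y')) := by ring
    _ ≤ (1/δ) * (p n * Real.exp (σ n * y')) := by
        apply mul_le_mul_of_nonneg_right hb (by positivity)

lemma summable_c_of_lt (hp : ∀ n, 1 ≤ p n) (hσpos : ∀ n, 0 < σ n)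
    {y y' : ℝ} (hyy' : y < y') (hs : Summable fun n => p n * Real.exp (σ n * y')) :
    Summable fun n => p n * σ n ^ 2 * Real.exp (σ n * y) := by
  set δ := (y' - y)/2 with hδdef
  have hδ : 0 < δ := by simp [hδdef]; linarith
  refine ((hs.mul_left ((1/δ)^2)).of_nonneg_of_le (fun n => by have h0 : (0:ℝ) ≤ p n := le_trans zero_le_one (hp n); have h1 := (hσpos n).le; positivity) (fun n => ?_))
  have h0 : (0:ℝ) ≤ p n := le_trans zero_le_one (hp n)
  have : σ n * y = σ n * y' + (-(σ n * δ)) + (-(σ n * δ)) := by simp [hδdef]; ring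
  rw [this, Real.exp_add, Real.exp_add]
  have hb : σ n * Real.exp (-(σ n * δ)) ≤ 1/δ := texp_le (hσpos n).le hδ
  have hexp : (0:ℝ) < Real.exp (-(σ n * δ)) := Real.exp_pos _
  calc p n * σ n ^ 2 * (Real.exp (σ n * y') * Real.exp (-(σ n * δ)) * Real.exp (-(σ n * δ)))
      = (σ n * Real.exp (-(σ n * δ))) * (σ n * Real.exp (-(σ n * δ))) * (p n * Real.exp (σ n * y')) := by ring
    _ ≤ (1/δ) * (1/δ) * (p n * Real.exp (σ n * y')) := by
        have h0 : (0:ℝ) ≤ p n := le_trans zero_le_one (hp n)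
        apply mul_le_mul_of_nonneg_right ?_ (by positivity)
        exact mul_le_mul hb hb (mul_nonneg (hσpos n).le hexp.le) (by positivity)
    _ = (1/δ)^2 * (p n * Real.exp (σ n * y')) := by ring

end Aux

section Main
variable {p σ : ℕ → ℝ} {α : ℝ}

lemma sumA (h1 : Set.Iio (-α) ⊆ fDom p σ) {y : ℝ} (hy : y < -α) :
    Summable fun n => p n * Real.exp (σ n * y) := h1 hy

lemma sumB (hp : ∀ n, 1 ≤ p n) (hσpos : ∀ n, 0 < σ n) (h1 : Set.Iio (-α) ⊆ fDom p σ)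
    {y : ℝ} (hy : y < -α) : Summable fun n => p n * σ n * Real.exp (σ n * y) :=
  summable_b_of_lt hp hσpos (show y < (y + -α)/2 by linarith)
    (sumA h1 (show (y + -α)/2 < -α by linarith))

lemma sumC (hp : ∀ n, 1 ≤ p n) (hσpos : ∀ n, 0 < σ n) (h1 : Set.Iio (-α) ⊆ fDom p σ)
    {y : ℝ} (hy : y < -α) : Summable fun n => p n * σ n ^ 2 * Real.exp (σ n * y) :=
  summable_c_of_lt hp hσpos (show y < (y + -α)/2 by linarith)
    (sumA h1 (show (y + -α)/2 < -α by linarith))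

lemma term_pos (hp : ∀ n, 1 ≤ p n) (n : ℕ) (y : ℝ) : 0 < p n * Real.exp (σ n * y) :=
  mul_pos (lt_of_lt_of_le zero_lt_one (hp n)) (Real.exp_pos _)

lemma termb_pos (hp : ∀ n, 1 ≤ p n) (hσpos : ∀ n, 0 < σ n) (n : ℕ) (y : ℝ) :
    0 < p n * σ n * Real.exp (σ n * y) :=
  mul_pos (mul_pos (lt_of_lt_of_le zero_lt_one (hp n)) (hσpos n)) (Real.exp_pos _)

lemma fR_pos (hp : ∀ n, 1 ≤ p n) {y : ℝ} (hs : Summable fun n => p n * Real.exp (σ n * y)) :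
    0 < fR p σ y :=
  Summable.tsum_pos hs (fun n => (term_pos hp n y).le) 0 (term_pos hp 0 y)

lemma fD_pos (hp : ∀ n, 1 ≤ p n) (hσpos : ∀ n, 0 < σ n) {y : ℝ}
    (hs : Summable fun n => p n * σ n * Real.exp (σ n * y)) : 0 < fD p σ y :=
  Summable.tsum_pos hs (fun n => (termb_pos hp hσpos n y).le) 0 (termb_pos hp hσpos 0 y)

lemma exists_min (hσpos : ∀ n, 0 < σ n) (hσtop : Tendsto σ atTop atTop) :
    ∃ n₀, IsLeast (Set.range σ) (σ n₀) := by
  obtain ⟨N, hN⟩ := (hσtop.eventually_ge_atTop (σ 0)).exists_forall_of_atTop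
  obtain ⟨n₀, hn₀mem, hn₀⟩ := Finset.exists_min_image (Finset.range (N+1)) σ ⟨0, by simp⟩
  refine ⟨n₀, ⟨n₀, rfl⟩, ?_⟩
  rintro t ⟨n, rfl⟩
  rcases le_or_gt n N with h | h
  · exact hn₀ n (Finset.mem_range.2 (Nat.lt_succ_of_le h))
  · exact le_trans (hn₀ 0 (by simp)) (hN n h.le)

lemma theta1_pos (hσpos : ∀ n, 0 < σ n) (hσtop : Tendsto σ atTop atTop) :
    0 < sInf (Set.range σ) := by
  obtain ⟨n₀, hle⟩ := exists_min hσpos hσtop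
  rw [hle.csInf_eq]; exact hσpos n₀

end Main

section Deriv
variable {p σ : ℕ → ℝ} {α : ℝ}

lemma hasDerivAt_term (n : ℕ) (c : ℝ) (z : ℝ) :
    HasDerivAt (fun w => c * Real.exp (σ n * w)) (c * σ n * Real.exp (σ n * z)) z := by
  have h := (((hasDerivAt_id z).const_mul (σ n)).exp).const_mul c
  refine h.congr_deriv ?_; simp only [id]; ring

lemma norm_term_le (hp : ∀ n, 1 ≤ p n) (hσpos : ∀ n, 0 < σ n) (n : ℕ) {c : ℝ} (hc : 0 ≤ c)
    {z y' : ℝ} (hz : z ≤ y') : ‖c * Real.exp (σ n * z)‖ ≤ c * Real.exp (σ n * y') := by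
  rw [Real.norm_eq_abs, abs_of_nonneg (by positivity)]
  exact mul_le_mul_of_nonneg_left (Real.exp_le_exp.2 (mul_le_mul_of_nonneg_left hz (hσpos n).le)) hc

lemma hasDerivAt_fR (hp : ∀ n, 1 ≤ p n) (hσpos : ∀ n, 0 < σ n) (h1 : Set.Iio (-α) ⊆ fDom p σ)
    {y : ℝ} (hy : y < -α) : HasDerivAt (fR p σ) (fD p σ y) y := by
  set y' := (y + -α)/2 with hy'def
  have hy' : y' < -α := by rw [hy'def]; linarith
  have hyy' : y < y' := by rw [hy'def]; linarith
  exact hasDerivAt_tsum_of_isPreconnected (sumB hp hσpos h1 hy') isOpen_Iio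
    (convex_Iio y').isPreconnected
    (fun n z _ => hasDerivAt_term n (p n) z)
    (fun n z hz => by
      have := norm_term_le (σ := σ) hp hσpos n
        (mul_nonneg (le_trans zero_le_one (hp n)) (hσpos n).le) (le_of_lt hz)
      simpa [mul_assoc, mul_comm, mul_left_comm] using this)
    hyy' (sumA h1 hy) hyy'

lemma hasDerivAt_fD (hp : ∀ n, 1 ≤ p n) (hσpos : ∀ n, 0 < σ n) (h1 : Set.Iio (-α) ⊆ fDom p σ)
    {y : ℝ} (hy : y < -α) :
    HasDerivAt (fD p σ) (∑' n, p n * σ n ^ 2 * Real.exp (σ n * y)) y := by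
  set y' := (y + -α)/2 with hy'def
  have hy' : y' < -α := by rw [hy'def]; linarith
  have hyy' : y < y' := by rw [hy'def]; linarith
  have key := hasDerivAt_tsum_of_isPreconnected (sumC hp hσpos h1 hy') isOpen_Iio
    (convex_Iio y').isPreconnected
    (fun n z (_ : z ∈ Set.Iio y') => hasDerivAt_term n (p n * σ n) z)
    (fun n z hz => by
      have h2 := norm_term_le (σ := σ) hp hσpos n
        (mul_nonneg (mul_nonneg (le_trans zero_le_one (hp n)) (hσpos n).le) (hσpos n).le)
        (le_of_lt hz)
      calc ‖p n * σ n * σ n * Real.exp (σ n * z)‖ ≤ p n * σ n * σ n * Real.exp (σ n * y') := h2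
        _ = p n * σ n ^ 2 * Real.exp (σ n * y') := by ring)
    hyy' (sumB hp hσpos h1 (hyy'.trans hy')) hyy'
  have h2 : (∑' n, p n * σ n * σ n * Real.exp (σ n * y)) = ∑' n, p n * σ n ^ 2 * Real.exp (σ n * y) := by
    apply tsum_congr; intro n; ring
  rw [h2] at key
  exact key

lemma tsum_cs {σ Q : ℕ → ℝ} (hq : ∀ n, 0 ≤ Q n) (h0 : Summable Q)
    (h2 : Summable fun n => Q n * σ n ^ 2) :
    (∑' n, Q n * σ n) ^ 2 ≤ (∑' n, Q n) * (∑' n, Q n * σ n ^ 2) := by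
  by_cases h1 : Summable fun n => Q n * σ n
  · have key : ∀ s : Finset ℕ, (∑ i ∈ s, Q i * σ i) ^ 2 ≤ (∑' n, Q n) * (∑' n, Q n * σ n ^ 2) := by
      intro s
      have cs := Finset.sum_mul_sq_le_sq_mul_sq s (fun i => Real.sqrt (Q i))
        (fun i => Real.sqrt (Q i) * σ i)
      have e1 : ∀ i, Real.sqrt (Q i) * (Real.sqrt (Q i) * σ i) = Q i * σ i := by
        intro i; rw [← mul_assoc, Real.mul_self_sqrt (hq i)]
      have e2 : ∀ i, Real.sqrt (Q i) ^ 2 = Q i := fun i => Real.sq_sqrt (hq i)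
      have e3 : ∀ i, (Real.sqrt (Q i) * σ i) ^ 2 = Q i * σ i ^ 2 := by
        intro i; rw [mul_pow, Real.sq_sqrt (hq i)]
      rw [Finset.sum_congr rfl (fun i _ => e1 i), Finset.sum_congr rfl (fun i _ => e2 i),
        Finset.sum_congr rfl (fun i _ => e3 i)] at cs
      refine cs.trans (mul_le_mul ?_ ?_ ?_ ?_)
      · exact Summable.sum_le_tsum s (fun i _ => hq i) h0
      · exact Summable.sum_le_tsum s (fun i _ => mul_nonneg (hq i) (sq_nonneg _)) h2
      · exact Finset.sum_nonneg (fun i _ => mul_nonneg (hq i) (sq_nonneg _))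
      · exact tsum_nonneg hq
    have ht : Tendsto (fun s : Finset ℕ => (∑ i ∈ s, Q i * σ i) ^ 2) atTop
        (nhds ((∑' n, Q n * σ n) ^ 2)) := (continuous_pow 2).continuousAt.tendsto.comp h1.hasSum
    exact le_of_tendsto ht (Eventually.of_forall key)
  · rw [tsum_eq_zero_of_not_summable h1]
    have : (0:ℝ) ≤ (∑' n, Q n) * (∑' n, Q n * σ n ^ 2) :=
      mul_nonneg (tsum_nonneg hq) (tsum_nonneg (fun n => mul_nonneg (hq n) (sq_nonneg _)))
    simpa using this

section W
variable {p σ : ℕ → ℝ} {α : ℝ}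

/-- strict Cauchy-Schwarz for our series -/
lemma W_pos (hp : ∀ n, 1 ≤ p n) (hσpos : ∀ n, 0 < σ n) (hσtop : Tendsto σ atTop atTop)
    (h1 : Set.Iio (-α) ⊆ fDom p σ) {y : ℝ} (hy : y < -α) :
    (fD p σ y) ^ 2 < (∑' n, p n * σ n ^ 2 * Real.exp (σ n * y)) * fR p σ y := by
  classical
  obtain ⟨n₀, hmem, hlb⟩ := exists_min hσpos hσtop
  have hAs := sumA h1 hy
  have hBs := sumB hp hσpos h1 hy
  have hCs := sumC hp hσpos h1 hy
  set q : ℕ → ℝ := fun n => if n = n₀ then 0 else p n with hqdef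
  have hq0 : ∀ n, 0 ≤ q n := by
    intro n; rw [hqdef]; dsimp only; split <;> simp [le_trans zero_le_one (hp n)]
  have hqle : ∀ n, q n ≤ p n := by
    intro n; rw [hqdef]; dsimp only; split
    · exact le_trans zero_le_one (hp n)
    · exact le_rfl
  have hvs : Summable fun n => q n * Real.exp (σ n * y) :=
    hAs.of_nonneg_of_le (fun n => mul_nonneg (hq0 n) (Real.exp_pos _).le)
      (fun n => mul_le_mul_of_nonneg_right (hqle n) (Real.exp_pos _).le)
  have hvDs : Summable fun n => q n * σ n * Real.exp (σ n * y) :=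
    hBs.of_nonneg_of_le (fun n => mul_nonneg (mul_nonneg (hq0 n) (hσpos n).le) (Real.exp_pos _).le)
      (fun n => by
        apply mul_le_mul_of_nonneg_right _ (Real.exp_pos _).le
        exact mul_le_mul_of_nonneg_right (hqle n) (hσpos n).le)
  have hvDDs : Summable fun n => q n * σ n ^ 2 * Real.exp (σ n * y) :=
    hCs.of_nonneg_of_le
      (fun n => mul_nonneg (mul_nonneg (hq0 n) (sq_nonneg _)) (Real.exp_pos _).le)
      (fun n => by
        apply mul_le_mul_of_nonneg_right _ (Real.exp_pos _).le
        exact mul_le_mul_of_nonneg_right (hqle n) (sq_nonneg _))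
  set a : ℝ := σ n₀ with ha
  set u : ℝ := p n₀ * Real.exp (a * y) with hu
  set v : ℝ := ∑' n, q n * Real.exp (σ n * y) with hv
  set vD : ℝ := ∑' n, q n * σ n * Real.exp (σ n * y) with hvD
  set vDD : ℝ := ∑' n, q n * σ n ^ 2 * Real.exp (σ n * y) with hvDD
  -- splitting
  have split : ∀ (c : ℕ → ℝ), Summable (fun n => p n * c n) →
      (∑' n, p n * c n) = p n₀ * c n₀ + ∑' n, q n * c n := by
    intro c hc
    rw [Summable.tsum_eq_add_tsum_ite hc n₀]
    congr 1
    apply tsum_congr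
    intro n
    rw [hqdef]; dsimp only; split <;> simp
  have hfR : fR p σ y = u + v := split (fun n => Real.exp (σ n * y)) hAs
  have hfD : fD p σ y = a * u + vD := by
    have h := split (fun n => σ n * Real.exp (σ n * y)) (by
      apply hBs.congr; intro n; ring)
    calc fD p σ y = ∑' n, p n * (σ n * Real.exp (σ n * y)) := by
          apply tsum_congr; intro n; ring
      _ = p n₀ * (σ n₀ * Real.exp (σ n₀ * y)) + ∑' n, q n * (σ n * Real.exp (σ n * y)) := h
      _ = a * u + vD := by
          congr 1
          · rw [hu, ha]; ring
          · rw [hvD]; apply tsum_congr; intro n; ring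
  have hfDD : (∑' n, p n * σ n ^ 2 * Real.exp (σ n * y)) = a ^ 2 * u + vDD := by
    have h := split (fun n => σ n ^ 2 * Real.exp (σ n * y)) (by
      apply hCs.congr; intro n; ring)
    calc (∑' n, p n * σ n ^ 2 * Real.exp (σ n * y))
        = ∑' n, p n * (σ n ^ 2 * Real.exp (σ n * y)) := by apply tsum_congr; intro n; ring
      _ = p n₀ * (σ n₀ ^ 2 * Real.exp (σ n₀ * y)) + ∑' n, q n * (σ n ^ 2 * Real.exp (σ n * y)) := h
      _ = a ^ 2 * u + vDD := by
          congr 1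
          · rw [hu, ha]; ring
          · rw [hvDD]; apply tsum_congr; intro n; ring
  -- the quadratic term T
  have hsumT : Summable fun n => q n * (σ n - a) ^ 2 * Real.exp (σ n * y) := by
    apply (((hvs.mul_left (a^2)).sub (hvDs.mul_left (2*a))).add hvDDs).congr
    intro n; ring
  have hT : (∑' n, q n * (σ n - a) ^ 2 * Real.exp (σ n * y))
      = a ^ 2 * v - 2 * a * vD + vDD := by
    have e : ∀ n, q n * (σ n - a) ^ 2 * Real.exp (σ n * y)
        = a ^ 2 * (q n * Real.exp (σ n * y)) - 2 * a * (q n * σ n * Real.exp (σ n * y))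
          + q n * σ n ^ 2 * Real.exp (σ n * y) := by intro n; ring
    calc (∑' n, q n * (σ n - a) ^ 2 * Real.exp (σ n * y))
        = ∑' n, (a ^ 2 * (q n * Real.exp (σ n * y)) - 2 * a * (q n * σ n * Real.exp (σ n * y))
          + q n * σ n ^ 2 * Real.exp (σ n * y)) := tsum_congr e
      _ = a ^ 2 * v - 2 * a * vD + vDD := by
          rw [Summable.tsum_add (((hvs.mul_left _).sub (hvDs.mul_left _))) hvDDs,
            Summable.tsum_sub (hvs.mul_left _) (hvDs.mul_left _), tsum_mul_left, tsum_mul_left,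
            hv, hvD, hvDD]
  have hTpos : 0 < a ^ 2 * v - 2 * a * vD + vDD := by
    rw [← hT]
    obtain ⟨n₁, hn₁⟩ := (hσtop.eventually_ge_atTop (a + 1)).exists
    have hσn₁ : a < σ n₁ := by linarith
    have hn₁0 : n₁ ≠ n₀ := fun h => by rw [h, ← ha] at hσn₁; exact lt_irrefl _ hσn₁
    have hqn₁ : q n₁ = p n₁ := by rw [hqdef]; simp [hn₁0]
    apply Summable.tsum_pos hsumT
      (fun n => mul_nonneg (mul_nonneg (hq0 n) (sq_nonneg _)) (Real.exp_pos _).le) n₁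
    rw [hqn₁]
    have h2 : 0 < (σ n₁ - a) ^ 2 := by
      have : σ n₁ - a ≠ 0 := by intro h; rw [sub_eq_zero] at h; rw [h] at hσn₁; exact lt_irrefl _ hσn₁
      positivity
    have h3 : (0:ℝ) < p n₁ := lt_of_lt_of_le zero_lt_one (hp n₁)
    positivity
  have hCS : vD ^ 2 ≤ v * vDD := by
    have := tsum_cs (σ := σ) (Q := fun n => q n * Real.exp (σ n * y))
      (fun n => mul_nonneg (hq0 n) (Real.exp_pos _).le) hvs
      (hvDDs.congr (fun n => by ring))
    calc vD ^ 2 = (∑' n, (q n * Real.exp (σ n * y)) * σ n) ^ 2 := by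
          rw [hvD]; congr 1; apply tsum_congr; intro n; ring
      _ ≤ (∑' n, q n * Real.exp (σ n * y)) * (∑' n, (q n * Real.exp (σ n * y)) * σ n ^ 2) := this
      _ = v * vDD := by
          rw [hv, hvDD]; congr 1; apply tsum_congr; intro n; ring
  have hupos : 0 < u := by
    rw [hu]; exact mul_pos (lt_of_lt_of_le zero_lt_one (hp n₀)) (Real.exp_pos _)
  rw [hfR, hfD, hfDD]
  nlinarith [mul_pos hupos hTpos, hCS]

end W

section G
variable {p σ : ℕ → ℝ} {α : ℝ}

noncomputable def gg (p σ : ℕ → ℝ) (y : ℝ) : ℝ := fD p σ y / fR p σ y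

lemma theta1_isLeast (hσpos : ∀ n, 0 < σ n) (hσtop : Tendsto σ atTop atTop) :
    IsLeast (Set.range σ) (sInf (Set.range σ)) := by
  obtain ⟨n₀, h⟩ := exists_min hσpos hσtop
  rwa [h.csInf_eq]

lemma hasDerivAt_gg (hp : ∀ n, 1 ≤ p n) (hσpos : ∀ n, 0 < σ n)
    (h1 : Set.Iio (-α) ⊆ fDom p σ) {y : ℝ} (hy : y < -α) :
    HasDerivAt (gg p σ)
      (((∑' n, p n * σ n ^ 2 * Real.exp (σ n * y)) * fR p σ y - fD p σ y * fD p σ y)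
        / fR p σ y ^ 2) y := by
  exact (hasDerivAt_fD hp hσpos h1 hy).div (hasDerivAt_fR hp hσpos h1 hy)
    (ne_of_gt (fR_pos hp (sumA h1 hy)))

lemma deriv_gg_pos (hp : ∀ n, 1 ≤ p n) (hσpos : ∀ n, 0 < σ n) (hσtop : Tendsto σ atTop atTop)
    (h1 : Set.Iio (-α) ⊆ fDom p σ) {y : ℝ} (hy : y < -α) : 0 < deriv (gg p σ) y := by
  rw [(hasDerivAt_gg hp hσpos h1 hy).deriv]
  apply div_pos
  · have := W_pos hp hσpos hσtop h1 hy
    nlinarith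
  · exact pow_pos (fR_pos hp (sumA h1 hy)) 2

lemma contOn_gg (hp : ∀ n, 1 ≤ p n) (hσpos : ∀ n, 0 < σ n)
    (h1 : Set.Iio (-α) ⊆ fDom p σ) : ContinuousOn (gg p σ) (Set.Iio (-α)) :=
  fun y hy => ((hasDerivAt_gg hp hσpos h1 hy).continuousAt).continuousWithinAt

lemma strictMonoOn_gg (hp : ∀ n, 1 ≤ p n) (hσpos : ∀ n, 0 < σ n)
    (hσtop : Tendsto σ atTop atTop) (h1 : Set.Iio (-α) ⊆ fDom p σ) :
    StrictMonoOn (gg p σ) (Set.Iio (-α)) := by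
  apply strictMonoOn_of_deriv_pos (convex_Iio _) (contOn_gg hp hσpos h1)
  intro y hy
  rw [interior_Iio] at hy
  exact deriv_gg_pos hp hσpos hσtop h1 hy

lemma theta1_lt_gg (hp : ∀ n, 1 ≤ p n) (hσpos : ∀ n, 0 < σ n)
    (hσtop : Tendsto σ atTop atTop) (h1 : Set.Iio (-α) ⊆ fDom p σ) {y : ℝ} (hy : y < -α) :
    sInf (Set.range σ) * fR p σ y < fD p σ y := by
  set θ₁ := sInf (Set.range σ) with hθ₁
  have hL := theta1_isLeast hσpos hσtop
  have hAs := sumA h1 hy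
  have hBs := sumB hp hσpos h1 hy
  have hsum : Summable fun n => p n * (σ n - θ₁) * Real.exp (σ n * y) :=
    (hBs.sub (hAs.mul_left θ₁)).congr (fun n => by ring)
  have key : 0 < ∑' n, p n * (σ n - θ₁) * Real.exp (σ n * y) := by
    obtain ⟨n₁, hn₁⟩ := (hσtop.eventually_ge_atTop (θ₁ + 1)).exists
    apply Summable.tsum_pos hsum (fun n => ?_) n₁
    · have h2 : 0 < σ n₁ - θ₁ := by linarith
      have h3 : (0:ℝ) < p n₁ := lt_of_lt_of_le zero_lt_one (hp n₁)
      positivity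
    · have h4 : 0 ≤ σ n - θ₁ := sub_nonneg.2 (hL.2 ⟨n, rfl⟩)
      have h3 : (0:ℝ) ≤ p n := le_trans zero_le_one (hp n)
      positivity
  have : (∑' n, p n * (σ n - θ₁) * Real.exp (σ n * y)) = fD p σ y - θ₁ * fR p σ y := by
    rw [fD, fR, ← tsum_mul_left, ← Summable.tsum_sub hBs (hAs.mul_left θ₁)]
    apply tsum_congr; intro n; ring
  rw [this] at key
  linarith

lemma gg_lt_theta2 (hp : ∀ n, 1 ≤ p n) (hσpos : ∀ n, 0 < σ n)
    (hσtop : Tendsto σ atTop atTop) (h1 : Set.Iio (-α) ⊆ fDom p σ) {θ₂ : EReal}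
    (hθ₂ : Tendsto (fun y => ((fD p σ y / fR p σ y : ℝ) : EReal))
      (nhdsWithin (-α) (Set.Iio (-α))) (nhds θ₂))
    {y : ℝ} (hy : y < -α) : ((gg p σ y : ℝ) : EReal) < θ₂ := by
  set y'' := (y + -α)/2 with hy''
  have hy''mem : y'' < -α := by rw [hy'']; linarith
  have hlt : gg p σ y < gg p σ y'' :=
    strictMonoOn_gg hp hσpos hσtop h1 hy hy''mem (by rw [hy'']; linarith)
  have hle : ((gg p σ y'' : ℝ) : EReal) ≤ θ₂ := by
    apply ge_of_tendsto hθ₂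
    filter_upwards [Ioo_mem_nhdsLT hy''mem] with z hz
    have := (strictMonoOn_gg hp hσpos hσtop h1 hy''mem hz.2 hz.1).le
    exact_mod_cast this
  exact lt_of_lt_of_le (by exact_mod_cast hlt) hle

lemma exists_gg_lt (hp : ∀ n, 1 ≤ p n) (hσpos : ∀ n, 0 < σ n)
    (hσtop : Tendsto σ atTop atTop) (h1 : Set.Iio (-α) ⊆ fDom p σ)
    {t : ℝ} (ht : sInf (Set.range σ) < t) : ∃ y, y < -α ∧ gg p σ y < t := by
  set θ₁ := sInf (Set.range σ) with hθ₁
  have hL := theta1_isLeast hσpos hσtop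
  set y₀ := -α - 1 with hy₀
  have hy₀mem : y₀ < -α := by rw [hy₀]; linarith
  have hAs := sumA h1 hy₀mem
  have hBs := sumB hp hσpos h1 hy₀mem
  set T : ℝ → ℝ := fun y => ∑' n, p n * (σ n - θ₁) * Real.exp ((σ n - θ₁) * y) with hT
  have hbsum : Summable fun n => p n * (σ n - θ₁) * Real.exp ((σ n - θ₁) * y₀) := by
    apply ((hBs.sub (hAs.mul_left θ₁)).mul_right (Real.exp (-(θ₁ * y₀)))).congr
    intro n
    have he : (σ n - θ₁) * y₀ = σ n * y₀ + (-(θ₁ * y₀)) := by ring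
    rw [he, Real.exp_add]
    ring
  have hTtendsto : Tendsto T atBot (nhds 0) := by
    have h0 : (0:ℝ) = ∑' (n : ℕ), (0:ℝ) := by rw [tsum_zero]
    rw [hT, h0]
    apply tendsto_tsum_of_dominated_convergence hbsum
    · intro n
      rcases eq_or_lt_of_le (hL.2 ⟨n, rfl⟩ : θ₁ ≤ σ n) with h | h
      · simp [← h, hθ₁]
      · have hc : 0 < σ n - θ₁ := by linarith
        have : Tendsto (fun y => Real.exp ((σ n - θ₁) * y)) atBot (nhds 0) :=
          Real.tendsto_exp_atBot.comp (tendsto_id.const_mul_atBot hc)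
        simpa using this.const_mul (p n * (σ n - θ₁))
    · filter_upwards [eventually_le_atBot y₀] with y hyle n
      have h4 : 0 ≤ σ n - θ₁ := sub_nonneg.2 (hL.2 ⟨n, rfl⟩)
      have h3 : (0:ℝ) ≤ p n := le_trans zero_le_one (hp n)
      rw [Real.norm_eq_abs, abs_of_nonneg (by positivity)]
      exact mul_le_mul_of_nonneg_left (Real.exp_le_exp.2 (mul_le_mul_of_nonneg_left hyle h4))
        (by positivity)
  have hev : ∀ᶠ y in atBot, T y < t - θ₁ := by
    have := hTtendsto.eventually (eventually_lt_nhds (show (0:ℝ) < t - θ₁ by linarith))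
    exact this
  obtain ⟨y, hy1, hy2⟩ := (hev.and (eventually_lt_atBot (-α))).exists
  refine ⟨y, hy2, ?_⟩
  -- gg y ≤ θ₁ + T y
  have hAy := sumA h1 hy2
  have hBy := sumB hp hσpos h1 hy2
  have hfRpos := fR_pos hp hAy
  have hnum : fD p σ y - θ₁ * fR p σ y = Real.exp (θ₁ * y) * T y := by
    rw [hT, fD, fR, ← tsum_mul_left, ← Summable.tsum_sub hBy (hAy.mul_left θ₁), ← tsum_mul_left]
    apply tsum_congr; intro n
    rw [sub_mul, Real.exp_sub]
    have := (Real.exp_pos (θ₁ * y)).ne'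
    field_simp
  have hfRge : Real.exp (θ₁ * y) ≤ fR p σ y := by
    obtain ⟨n₀, hn₀⟩ := exists_min hσpos hσtop
    have h5 : θ₁ = σ n₀ := by rw [hθ₁, hn₀.csInf_eq]
    calc Real.exp (θ₁ * y) ≤ p n₀ * Real.exp (σ n₀ * y) := by
          rw [h5]
          exact le_mul_of_one_le_left (Real.exp_pos _).le (hp n₀)
      _ ≤ fR p σ y := Summable.le_tsum hAy n₀ (fun n _ => (term_pos hp n y).le)
  have hTnonneg : 0 ≤ T y := by
    rw [hT]
    apply tsum_nonneg
    intro n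
    have h4 : 0 ≤ σ n - θ₁ := sub_nonneg.2 (hL.2 ⟨n, rfl⟩)
    have h3 : (0:ℝ) ≤ p n := le_trans zero_le_one (hp n)
    positivity
  have : gg p σ y - θ₁ ≤ T y := by
    rw [gg, div_sub' hfRpos.ne', div_le_iff₀ hfRpos]
    have h6 := mul_le_mul_of_nonneg_right hfRge hTnonneg
    nlinarith [hnum]
  linarith

lemma gg_surj (hp : ∀ n, 1 ≤ p n) (hσpos : ∀ n, 0 < σ n)
    (hσtop : Tendsto σ atTop atTop) (h1 : Set.Iio (-α) ⊆ fDom p σ) {θ₂ : EReal}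
    (hθ₂ : Tendsto (fun y => ((fD p σ y / fR p σ y : ℝ) : EReal))
      (nhdsWithin (-α) (Set.Iio (-α))) (nhds θ₂))
    {t : ℝ} (ht1 : sInf (Set.range σ) < t) (ht2 : ((t:ℝ) : EReal) < θ₂) :
    ∃ y, y < -α ∧ gg p σ y = t := by
  obtain ⟨y₁, hy₁mem, hy₁⟩ := exists_gg_lt hp hσpos hσtop h1 ht1
  have hev : ∀ᶠ z in nhdsWithin (-α) (Set.Iio (-α)),
      ((t:ℝ):EReal) < ((fD p σ z / fR p σ z : ℝ) : EReal) :=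
    hθ₂.eventually (eventually_gt_nhds ht2)
  obtain ⟨y₂, hy₂gt, hy₂mem⟩ := (hev.and self_mem_nhdsWithin).exists
  have hy₂gt' : t < gg p σ y₂ := by rw [gg]; exact_mod_cast hy₂gt
  have hy₁y₂ : y₁ < y₂ := by
    by_contra hcon
    push_neg at hcon
    rcases eq_or_lt_of_le hcon with h | h
    · rw [h] at hy₂gt'; linarith
    · have := strictMonoOn_gg hp hσpos hσtop h1 hy₂mem hy₁mem h
      linarith
  have hsub : Set.Icc y₁ y₂ ⊆ Set.Iio (-α) := fun z hz => lt_of_le_of_lt hz.2 hy₂mem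
  have := intermediate_value_Icc hy₁y₂.le ((contOn_gg hp hσpos h1).mono hsub)
  obtain ⟨y, hymem, hyeq⟩ := this ⟨hy₁.le, hy₂gt'.le⟩
  exact ⟨y, hsub hymem, hyeq⟩

end G



section Part2
variable {p σ : ℕ → ℝ} {α : ℝ}

lemma tsumA_eq (p σ : ℕ → ℝ) (x y : ℝ) :
    (∑' n, p n * Real.exp (x + σ n * y)) = Real.exp x * fR p σ y := by
  rw [fR, ← tsum_mul_left]
  apply tsum_congr; intro n; rw [Real.exp_add]; ring

lemma tsumB_eq (p σ : ℕ → ℝ) (x y : ℝ) :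
    (∑' n, p n * σ n * Real.exp (x + σ n * y)) = Real.exp x * fD p σ y := by
  rw [fD, ← tsum_mul_left]
  apply tsum_congr; intro n; rw [Real.exp_add]; ring

lemma sumA' (hp : ∀ n, 1 ≤ p n) (h1 : Set.Iio (-α) ⊆ fDom p σ) {y : ℝ} (hy : y < -α) (x : ℝ) :
    Summable fun n => p n * Real.exp (x + σ n * y) := by
  apply ((sumA h1 hy).mul_left (Real.exp x)).congr
  intro n; rw [Real.exp_add]; ring

lemma sumB' (hp : ∀ n, 1 ≤ p n) (hσpos : ∀ n, 0 < σ n) (h1 : Set.Iio (-α) ⊆ fDom p σ)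
    {y : ℝ} (hy : y < -α) (x : ℝ) :
    Summable fun n => p n * σ n * Real.exp (x + σ n * y) := by
  apply ((sumB hp hσpos h1 hy).mul_left (Real.exp x)).congr
  intro n; rw [Real.exp_add]; ring

lemma hasFDerivAt_h (hp : ∀ n, 1 ≤ p n) (hσpos : ∀ n, 0 < σ n)
    (h1 : Set.Iio (-α) ⊆ fDom p σ) {x y : ℝ} (hy : y < -α) :
    HasFDerivAt (fun z : ℝ × ℝ => Real.exp z.1 * fR p σ z.2)
      (gradCLM (Real.exp x * fR p σ y) (Real.exp x * fD p σ y)) (x, y) := by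
  have hfst : HasFDerivAt (fun z : ℝ × ℝ => Real.exp z.1)
      (Real.exp x • ContinuousLinearMap.fst ℝ ℝ ℝ) (x, y) :=
    HasDerivAt.comp_hasFDerivAt (f := Prod.fst) (x, y) (Real.hasDerivAt_exp x) hasFDerivAt_fst
  have hsnd : HasFDerivAt (fun z : ℝ × ℝ => fR p σ z.2)
      (fD p σ y • ContinuousLinearMap.snd ℝ ℝ ℝ) (x, y) :=
    HasDerivAt.comp_hasFDerivAt (f := Prod.snd) (x, y) (hasDerivAt_fR hp hσpos h1 hy) hasFDerivAt_snd
  have hmul := hfst.mul hsnd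
  refine hmul.congr_fderiv ?_
  apply ContinuousLinearMap.ext
  intro z
  simp [gradCLM, ContinuousLinearMap.smul_apply]
  ring

end Part2

section Part3
variable {p σ : ℕ → ℝ} {α : ℝ}

/-- the image of the gradient map -/
lemma image_grad (hp : ∀ n, 1 ≤ p n) (hσpos : ∀ n, 0 < σ n)
    (hσtop : Tendsto σ atTop atTop) (h1 : Set.Iio (-α) ⊆ fDom p σ) {θ₂ : EReal}
    (hθ₂ : Tendsto (fun y => ((fD p σ y / fR p σ y : ℝ) : EReal))
      (nhdsWithin (-α) (Set.Iio (-α))) (nhds θ₂)) :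
    ((fun z : ℝ × ℝ => ((∑' n, p n * Real.exp (z.1 + σ n * z.2)),
        (∑' n, p n * σ n * Real.exp (z.1 + σ n * z.2)))) '' (Set.univ ×ˢ Set.Iio (-α)) =
      {w : ℝ × ℝ | 0 < w.1 ∧ sInf (Set.range σ) * w.1 < w.2 ∧
        ((w.2 : ℝ) : EReal) < θ₂ * ((w.1 : ℝ) : EReal)}) := by
  ext w
  simp only [Set.mem_image, Set.mem_setOf_eq, Set.mem_prod, Set.mem_univ, true_and,
    Set.mem_Iio, Prod.exists]
  constructor
  · rintro ⟨x, y, hy, rfl⟩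
    rw [tsumA_eq, tsumB_eq]
    have hfR := fR_pos hp (sumA h1 hy)
    have hfD := fD_pos hp hσpos (sumB hp hσpos h1 hy)
    have hex := Real.exp_pos x
    have hu : 0 < Real.exp x * fR p σ y := by positivity
    refine ⟨hu, ?_, ?_⟩
    · have := theta1_lt_gg hp hσpos hσtop h1 hy
      calc sInf (Set.range σ) * (Real.exp x * fR p σ y)
          = Real.exp x * (sInf (Set.range σ) * fR p σ y) := by ring
        _ < Real.exp x * fD p σ y := by
            exact mul_lt_mul_of_pos_left this hex
    · -- e^x fD y < θ₂ * (e^x fR y)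
      have hglt := gg_lt_theta2 hp hσpos hσtop h1 hθ₂ hy
      have hgg : gg p σ y = fD p σ y / fR p σ y := rfl
      rcases eq_top_or_lt_top θ₂ with htop | hlt
      · rw [htop]
        rw [EReal.top_mul_of_pos (by exact_mod_cast hu)]
        exact EReal.coe_lt_top _
      · have hne_bot : θ₂ ≠ ⊥ := by
          intro hbot
          rw [hbot] at hglt
          exact (not_lt_bot hglt)
        lift θ₂ to ℝ using ⟨hlt.ne, hne_bot⟩ with c
        rw [← EReal.coe_mul, EReal.coe_lt_coe_iff]
        have hc : gg p σ y < c := by exact_mod_cast hglt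
        rw [hgg, div_lt_iff₀ hfR] at hc
        calc Real.exp x * fD p σ y < Real.exp x * (c * fR p σ y) :=
              mul_lt_mul_of_pos_left hc hex
          _ = c * (Real.exp x * fR p σ y) := by ring
  · rintro ⟨hu, hlt1, hlt2⟩
    -- set t := w.2 / w.1
    set t := w.2 / w.1 with htdef
    have ht1 : sInf (Set.range σ) < t := by
      rw [htdef, lt_div_iff₀ hu]; linarith [hlt1]
    have ht2 : ((t:ℝ):EReal) < θ₂ := by
      rcases eq_top_or_lt_top θ₂ with htop | hltt
      · rw [htop]; exact EReal.coe_lt_top _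
      · have hne_bot : θ₂ ≠ ⊥ := by
          intro hbot
          rw [hbot, EReal.bot_mul_of_pos (show (0:EReal) < ((w.1:ℝ):EReal) by exact_mod_cast hu)] at hlt2
          exact (not_lt_bot hlt2)
        lift θ₂ to ℝ using ⟨hltt.ne, hne_bot⟩ with c
        rw [← EReal.coe_mul, EReal.coe_lt_coe_iff] at hlt2
        rw [EReal.coe_lt_coe_iff]
        show w.2 / w.1 < c
        rw [div_lt_iff₀ hu]
        linarith
    obtain ⟨y, hy, hgy⟩ := gg_surj hp hσpos hσtop h1 hθ₂ ht1 ht2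
    have hfR := fR_pos hp (sumA h1 hy)
    refine ⟨Real.log (w.1 / fR p σ y), y, hy, ?_⟩
    have hex : Real.exp (Real.log (w.1 / fR p σ y)) = w.1 / fR p σ y :=
      Real.exp_log (by positivity)
    rw [tsumA_eq, tsumB_eq, hex]
    have h1' : w.1 / fR p σ y * fR p σ y = w.1 := div_mul_cancel₀ _ hfR.ne'
    have h2' : w.1 / fR p σ y * fD p σ y = w.2 := by
      have : fD p σ y = t * fR p σ y := by
        rw [← hgy, gg]; field_simp
      rw [this]
      show w.1 / fR p σ y * (w.2 / w.1 * fR p σ y) = w.2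
      field_simp
    rw [h1', h2']
end Part3



section Part4
variable {p σ : ℕ → ℝ} {α : ℝ}

lemma fR_mono (hp : ∀ n, 1 ≤ p n) (hσpos : ∀ n, 0 < σ n) {y y' : ℝ} (hyy' : y ≤ y')
    (hs' : Summable fun n => p n * Real.exp (σ n * y')) : fR p σ y ≤ fR p σ y' := by
  apply Summable.tsum_le_tsum _ (summable_a_of_lt hp hσpos hyy' hs') hs'
  intro n
  have h0 : (0:ℝ) ≤ p n := le_trans zero_le_one (hp n)
  exact mul_le_mul_of_nonneg_left (Real.exp_le_exp.2 (mul_le_mul_of_nonneg_left hyy' (hσpos n).le)) h0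

lemma theta2_lt_top_of_summable (hp : ∀ n, 1 ≤ p n) (hσpos : ∀ n, 0 < σ n)
    (h1 : Set.Iio (-α) ⊆ fDom p σ) {θ₂ : EReal}
    (hθ₂ : Tendsto (fun y => ((fD p σ y / fR p σ y : ℝ) : EReal))
      (nhdsWithin (-α) (Set.Iio (-α))) (nhds θ₂))
    (hsB : Summable fun n => p n * σ n * Real.exp (σ n * (-α))) : θ₂ < ⊤ := by
  set y₀ : ℝ := -α - 1 with hy₀
  have hy₀mem : y₀ < -α := by rw [hy₀]; linarith
  have hfR0 := fR_pos hp (sumA h1 hy₀mem)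
  set γR : ℝ := ∑' n, p n * σ n * Real.exp (σ n * (-α)) with hγ
  set M : ℝ := γR / fR p σ y₀ with hM
  have hbound : ∀ y, y ∈ Set.Ioo y₀ (-α) → fD p σ y / fR p σ y ≤ M := by
    intro y hy
    have hAy := sumA h1 hy.2
    have hBy := sumB hp hσpos h1 hy.2
    have hfD : fD p σ y ≤ γR := by
      apply Summable.tsum_le_tsum _ hBy hsB
      intro n
      have h0 : (0:ℝ) ≤ p n * σ n := mul_nonneg (le_trans zero_le_one (hp n)) (hσpos n).le
      exact mul_le_mul_of_nonneg_left
        (Real.exp_le_exp.2 (mul_le_mul_of_nonneg_left hy.2.le (hσpos n).le)) h0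
    have hγpos : 0 ≤ γR := tsum_nonneg (fun n => (termb_pos hp hσpos n (-α)).le)
    have hfRy : fR p σ y₀ ≤ fR p σ y := fR_mono hp hσpos hy.1.le hAy
    rw [hM]
    exact div_le_div₀ hγpos hfD hfR0 hfRy
  have hle : θ₂ ≤ ((M : ℝ) : EReal) := by
    apply le_of_tendsto hθ₂
    filter_upwards [Ioo_mem_nhdsLT hy₀mem] with z hz
    exact_mod_cast hbound z hz
  exact lt_of_le_of_lt hle (EReal.coe_lt_top M)

lemma summable_at_of_theta2_lt_top (hp : ∀ n, 1 ≤ p n) (hσpos : ∀ n, 0 < σ n)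
    (hσtop : Tendsto σ atTop atTop) (h1 : Set.Iio (-α) ⊆ fDom p σ) {θ₂ : EReal}
    (hθ₂ : Tendsto (fun y => ((fD p σ y / fR p σ y : ℝ) : EReal))
      (nhdsWithin (-α) (Set.Iio (-α))) (nhds θ₂))
    (htop : θ₂ < ⊤) :
    (Summable fun n => p n * Real.exp (σ n * (-α))) ∧
      (Summable fun n => p n * σ n * Real.exp (σ n * (-α))) := by
  set y₀ : ℝ := -α - 1 with hy₀
  have hy₀mem : y₀ < -α := by rw [hy₀]; linarith
  have hglt₀ := gg_lt_theta2 hp hσpos hσtop h1 hθ₂ hy₀mem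
  have hbot : θ₂ ≠ ⊥ := fun h => by rw [h] at hglt₀; exact not_lt_bot hglt₀
  set B : ℝ := θ₂.toReal with hB
  have hθeq : θ₂ = ((B : ℝ) : EReal) := (EReal.coe_toReal htop.ne hbot).symm
  have hBlt : ∀ y, y < -α → fD p σ y ≤ B * fR p σ y := by
    intro y hy
    have := gg_lt_theta2 hp hσpos hσtop h1 hθ₂ hy
    rw [hθeq, EReal.coe_lt_coe_iff] at this
    rw [gg, div_lt_iff₀ (fR_pos hp (sumA h1 hy))] at this
    linarith
  have hBpos : 0 < B := by
    have h₁ := theta1_lt_gg hp hσpos hσtop h1 hy₀mem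
    have h₂ := hBlt y₀ hy₀mem
    have h₃ := fR_pos hp (sumA h1 hy₀mem)
    have h₄ := theta1_pos hσpos hσtop
    nlinarith
  -- φ := fR * exp(-B y) is antitone on Iio (-α)
  set φ : ℝ → ℝ := fun y => fR p σ y * Real.exp (-(B * y)) with hφ
  have hφderiv : ∀ y, y < -α → HasDerivAt φ
      ((fD p σ y - B * fR p σ y) * Real.exp (-(B * y))) y := by
    intro y hy
    have h₁ := hasDerivAt_fR hp hσpos h1 hy
    have h₂ : HasDerivAt (fun y : ℝ => Real.exp (-(B * y))) (-B * Real.exp (-(B * y))) y := by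
      have := (((hasDerivAt_id y).const_mul B).neg).exp
      refine this.congr_deriv ?_
      simp only [Pi.neg_apply, id]
      ring
    have := h₁.mul h₂
    refine this.congr_deriv ?_
    ring
  have hanti : AntitoneOn φ (Set.Iio (-α)) := by
    apply antitoneOn_of_deriv_nonpos (convex_Iio _)
    · intro y hy
      exact ((hφderiv y hy).continuousAt).continuousWithinAt
    · intro y hy
      rw [interior_Iio] at hy
      exact ((hφderiv y hy).differentiableAt).differentiableWithinAt
    · intro y hy
      rw [interior_Iio] at hy
      rw [(hφderiv y hy).deriv]
      have := hBlt y hy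
      have hexp := (Real.exp_pos (-(B * y))).le
      nlinarith
  -- global bound on fR
  set M : ℝ := fR p σ y₀ * Real.exp (-(B * y₀)) * Real.exp (B * (-α)) with hMdef
  have hfRbound : ∀ y, y < -α → fR p σ y ≤ M := by
    intro y hy
    rcases le_or_gt y y₀ with h | h
    · have step : fR p σ y ≤ fR p σ y₀ := fR_mono hp hσpos h (sumA h1 hy₀mem)
      have h2 : (1:ℝ) ≤ Real.exp (-(B * y₀)) * Real.exp (B * (-α)) := by
        rw [← Real.exp_add]
        apply Real.one_le_exp
        have : -(B * y₀) + B * (-α) = B * (-α - y₀) := by ring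
        rw [this, hy₀]
        nlinarith
      calc fR p σ y ≤ fR p σ y₀ := step
        _ ≤ fR p σ y₀ * (Real.exp (-(B * y₀)) * Real.exp (B * (-α))) :=
            le_mul_of_one_le_right (fR_pos hp (sumA h1 hy₀mem)).le h2
        _ = M := by rw [hMdef]; ring
    · have step := hanti (Set.mem_Iio.2 hy₀mem) (Set.mem_Iio.2 hy) h.le
      rw [hφ] at step
      dsimp only at step
      have hexp := Real.exp_pos (-(B * y))
      have h3 : fR p σ y ≤ fR p σ y₀ * Real.exp (-(B * y₀)) * Real.exp (B * y) := by
        have e1 : Real.exp (-(B*y)) * Real.exp (B*y) = 1 := by rw [← Real.exp_add]; simp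
        have h4 := mul_le_mul_of_nonneg_right step (Real.exp_pos (B*y)).le
        have h5 : fR p σ y * (Real.exp (-(B*y)) * Real.exp (B*y)) = fR p σ y := by
          rw [e1]; ring
        nlinarith [h4, h5]
      calc fR p σ y ≤ fR p σ y₀ * Real.exp (-(B * y₀)) * Real.exp (B * y) := h3
        _ ≤ M := by
            rw [hMdef]
            apply mul_le_mul_of_nonneg_left (Real.exp_le_exp.2 ?_) ?_
            · exact mul_le_mul_of_nonneg_left hy.le hBpos.le
            · have := fR_pos hp (sumA h1 hy₀mem)
              positivity
  -- partial sums at -α are bounded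
  have hA : Summable fun n => p n * Real.exp (σ n * (-α)) := by
    apply summable_of_sum_le (c := M) (fun n => (term_pos hp n (-α)).le)
    intro s
    have hcont0 : Continuous (fun y : ℝ => ∑ n ∈ s, p n * Real.exp (σ n * y)) := by
      apply continuous_finset_sum
      intro n _
      fun_prop
    have hcont : Tendsto (fun y => ∑ n ∈ s, p n * Real.exp (σ n * y))
        (nhdsWithin (-α) (Set.Iio (-α))) (nhds (∑ n ∈ s, p n * Real.exp (σ n * (-α)))) :=
      (hcont0.tendsto _).mono_left nhdsWithin_le_nhds
    apply le_of_tendsto hcont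
    filter_upwards [self_mem_nhdsWithin] with y hy
    calc ∑ n ∈ s, p n * Real.exp (σ n * y) ≤ fR p σ y :=
          Summable.sum_le_tsum s (fun n _ => (term_pos hp n y).le) (sumA h1 hy)
      _ ≤ M := hfRbound y hy
  have hB2 : Summable fun n => p n * σ n * Real.exp (σ n * (-α)) := by
    apply summable_of_sum_le (c := B * M) (fun n => (termb_pos hp hσpos n (-α)).le)
    intro s
    have hcont0 : Continuous (fun y : ℝ => ∑ n ∈ s, p n * σ n * Real.exp (σ n * y)) := by
      apply continuous_finset_sum
      intro n _
      fun_prop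
    have hcont : Tendsto (fun y => ∑ n ∈ s, p n * σ n * Real.exp (σ n * y))
        (nhdsWithin (-α) (Set.Iio (-α))) (nhds (∑ n ∈ s, p n * σ n * Real.exp (σ n * (-α)))) :=
      (hcont0.tendsto _).mono_left nhdsWithin_le_nhds
    apply le_of_tendsto hcont
    filter_upwards [self_mem_nhdsWithin] with y hy
    calc ∑ n ∈ s, p n * σ n * Real.exp (σ n * y) ≤ fD p σ y :=
          Summable.sum_le_tsum s (fun n _ => (termb_pos hp hσpos n y).le) (sumB hp hσpos h1 hy)
      _ ≤ B * fR p σ y := hBlt y hy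
      _ ≤ B * M := mul_le_mul_of_nonneg_left (hfRbound y hy) hBpos.le
  exact ⟨hA, hB2⟩

end Part4



section Part5
variable {p σ : ℕ → ℝ} {α : ℝ}

lemma hMBe_coe_eq (hp : ∀ n, 1 ≤ p n) (z : ℝ × ℝ)
    (hs : Summable fun n => p n * Real.exp (σ n * z.2)) :
    ((hMBe p σ z : ℝ≥0∞) : EReal) = ((Real.exp z.1 * fR p σ z.2 : ℝ) : EReal) := by
  have hs' : Summable fun n => p n * Real.exp (z.1 + σ n * z.2) := by
    apply (hs.mul_left (Real.exp z.1)).congr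
    intro n; rw [Real.exp_add]; ring
  rw [hMBe, ← ENNReal.ofReal_tsum_of_nonneg (fun n => by
    have h0 : (0:ℝ) ≤ p n := le_trans zero_le_one (hp n)
    positivity) hs']
  rw [tsumA_eq, EReal.coe_ennreal_ofReal, max_eq_left]
  have h1 : 0 ≤ fR p σ z.2 := tsum_nonneg (fun n => (term_pos hp n z.2).le)
  positivity

lemma hMBe_top (hp : ∀ n, 1 ≤ p n) (h2 : fDom p σ ⊆ Set.Iic (-α)) (z : ℝ × ℝ)
    (hz : -α < z.2) : (hMBe p σ z : ℝ≥0∞) = ⊤ := by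
  by_contra h
  have hsum := ENNReal.summable_toReal h
  have hsum2 : Summable fun n => p n * Real.exp (z.1 + σ n * z.2) := by
    apply hsum.congr
    intro n
    rw [ENNReal.toReal_ofReal]
    have h0 : (0:ℝ) ≤ p n := le_trans zero_le_one (hp n)
    positivity
  have : z.2 ∈ fDom p σ := by
    rw [fDom, Set.mem_setOf_eq]
    apply (hsum2.mul_left (Real.exp (-z.1))).congr
    intro n
    have he : Real.exp (-z.1) * (p n * Real.exp (z.1 + σ n * z.2))
        = p n * (Real.exp (-z.1) * Real.exp (z.1 + σ n * z.2)) := by ring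
    rw [he, ← Real.exp_add, show -z.1 + (z.1 + σ n * z.2) = σ n * z.2 by ring]
  have := h2 this
  rw [Set.mem_Iic] at this
  linarith

lemma conv_ineq (hp : ∀ n, 1 ≤ p n) (hσpos : ∀ n, 0 < σ n) (h1 : Set.Iio (-α) ⊆ fDom p σ)
    (hsA : Summable fun n => p n * Real.exp (σ n * (-α))) {y' : ℝ} (hy' : y' < -α) :
    fR p σ y' - fR p σ (-α) ≤ (y' + α) * fD p σ y' := by
  have hAy := sumA h1 hy'
  have hBy := sumB hp hσpos h1 hy'
  have hL : Summable fun n => p n * Real.exp (σ n * y') - p n * Real.exp (σ n * (-α)) :=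
    hAy.sub hsA
  have hR : Summable fun n => (y' + α) * (p n * σ n * Real.exp (σ n * y')) := hBy.mul_left _
  have hterm : ∀ n, p n * Real.exp (σ n * y') - p n * Real.exp (σ n * (-α))
      ≤ (y' + α) * (p n * σ n * Real.exp (σ n * y')) := by
    intro n
    have h0 : (0:ℝ) ≤ p n := le_trans zero_le_one (hp n)
    have hcv := Real.add_one_le_exp (σ n * (-α) - σ n * y')
    have he : Real.exp (σ n * (-α)) = Real.exp (σ n * y') * Real.exp (σ n * (-α) - σ n * y') := by
      rw [← Real.exp_add]; ring_nf
    have hep := (Real.exp_pos (σ n * y')).le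
    nlinarith [mul_le_mul_of_nonneg_left hcv hep, mul_le_mul_of_nonneg_left
      (mul_le_mul_of_nonneg_left hcv hep) h0]
  have := Summable.tsum_le_tsum hterm hL hR
  rw [Summable.tsum_sub hAy hsA, tsum_mul_left] at this
  exact this

lemma key_ineq (hp : ∀ n, 1 ≤ p n) (hσpos : ∀ n, 0 < σ n)
    (hsA : Summable fun n => p n * Real.exp (σ n * (-α)))
    (hsB : Summable fun n => p n * σ n * Real.exp (σ n * (-α)))
    (t : ℝ) {y' : ℝ} (hy' : y' ≤ -α) :
    fR p σ (-α) * (1 + t) + fD p σ (-α) * (y' + α) ≤ Real.exp t * fR p σ y' := by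
  have hAy : Summable fun n => p n * Real.exp (σ n * y') := summable_a_of_lt hp hσpos hy' hsA
  have hL : Summable fun n => p n * Real.exp (σ n * (-α)) * (1 + t)
      + p n * σ n * Real.exp (σ n * (-α)) * (y' + α) :=
    (hsA.mul_right _).add (hsB.mul_right _)
  have hR : Summable fun n => Real.exp t * (p n * Real.exp (σ n * y')) := hAy.mul_left _
  have hterm : ∀ n, p n * Real.exp (σ n * (-α)) * (1 + t)
      + p n * σ n * Real.exp (σ n * (-α)) * (y' + α)
      ≤ Real.exp t * (p n * Real.exp (σ n * y')) := by
    intro n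
    have h0 : (0:ℝ) ≤ p n := le_trans zero_le_one (hp n)
    have hcv := Real.add_one_le_exp (t + σ n * (y' + α))
    have he : Real.exp (σ n * y') * Real.exp t
        = Real.exp (σ n * (-α)) * Real.exp (t + σ n * (y' + α)) := by
      rw [← Real.exp_add, ← Real.exp_add]; ring_nf
    have hep := (Real.exp_pos (σ n * (-α))).le
    nlinarith [mul_le_mul_of_nonneg_left (mul_le_mul_of_nonneg_left hcv hep) h0]
  have := Summable.tsum_le_tsum hterm hL hR
  rw [Summable.tsum_add (hsA.mul_right _) (hsB.mul_right _), tsum_mul_right, tsum_mul_right,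
    tsum_mul_left] at this
  exact this

lemma tendsto_fD_left (hp : ∀ n, 1 ≤ p n) (hσpos : ∀ n, 0 < σ n)
    (h1 : Set.Iio (-α) ⊆ fDom p σ)
    (hsB : Summable fun n => p n * σ n * Real.exp (σ n * (-α))) :
    Tendsto (fD p σ) (nhdsWithin (-α) (Set.Iio (-α))) (nhds (fD p σ (-α))) := by
  have hgoal : Tendsto (fun y => ∑' n, p n * σ n * Real.exp (σ n * y))
      (nhdsWithin (-α) (Set.Iio (-α))) (nhds (∑' n, p n * σ n * Real.exp (σ n * (-α)))) := by
    apply tendsto_tsum_of_dominated_convergence hsB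
    · intro n
      have hc : Continuous (fun y : ℝ => p n * σ n * Real.exp (σ n * y)) := by fun_prop
      exact (hc.tendsto _).mono_left nhdsWithin_le_nhds
    · filter_upwards [self_mem_nhdsWithin] with y hy n
      have h0 : (0:ℝ) ≤ p n * σ n := mul_nonneg (le_trans zero_le_one (hp n)) (hσpos n).le
      rw [Real.norm_eq_abs, abs_of_nonneg (by positivity)]
      exact mul_le_mul_of_nonneg_left
        (Real.exp_le_exp.2 (mul_le_mul_of_nonneg_left (le_of_lt hy) (hσpos n).le)) h0
  exact hgoal

lemma vector_tendsto (hp : ∀ n, 1 ≤ p n) (hσpos : ∀ n, 0 < σ n)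
    (hsA : Summable fun n => p n * Real.exp (σ n * (-α)))
    (hsB : Summable fun n => p n * σ n * Real.exp (σ n * (-α))) (x : ℝ) :
    Tendsto (fun N => ∑ k ∈ Finset.range N,
        (p k * Real.exp (x - σ k * α)) • ((1 : ℝ), σ k)) atTop
      (nhds (Real.exp x * fR p σ (-α), Real.exp x * fD p σ (-α))) := by
  have hsA' : Summable fun n => p n * Real.exp (x - σ n * α) := by
    apply (hsA.mul_left (Real.exp x)).congr
    intro n
    rw [show x - σ n * α = x + σ n * (-α) by ring, Real.exp_add]; ring
  have hsB' : Summable fun n => p n * Real.exp (x - σ n * α) * σ n := by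
    apply (hsB.mul_left (Real.exp x)).congr
    intro n
    rw [show x - σ n * α = x + σ n * (-α) by ring, Real.exp_add]; ring
  have htA : Tendsto (fun N => ∑ k ∈ Finset.range N, p k * Real.exp (x - σ k * α)) atTop
      (nhds (Real.exp x * fR p σ (-α))) := by
    have := hsA'.hasSum.tendsto_sum_nat
    have heq : (∑' n, p n * Real.exp (x - σ n * α)) = Real.exp x * fR p σ (-α) := by
      rw [← tsumA_eq p σ x (-α)]
      apply tsum_congr; intro n; rw [show x - σ n * α = x + σ n * (-α) by ring]
    rwa [heq] at this
  have htB : Tendsto (fun N => ∑ k ∈ Finset.range N, p k * Real.exp (x - σ k * α) * σ k) atTop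
      (nhds (Real.exp x * fD p σ (-α))) := by
    have := hsB'.hasSum.tendsto_sum_nat
    have heq : (∑' n, p n * Real.exp (x - σ n * α) * σ n) = Real.exp x * fD p σ (-α) := by
      rw [← tsumB_eq p σ x (-α)]
      apply tsum_congr; intro n; rw [show x - σ n * α = x + σ n * (-α) by ring]; ring
    rwa [heq] at this
  have heq : ∀ N : ℕ, (∑ k ∈ Finset.range N, (p k * Real.exp (x - σ k * α)) • ((1 : ℝ), σ k))
      = (∑ k ∈ Finset.range N, p k * Real.exp (x - σ k * α),
         ∑ k ∈ Finset.range N, p k * Real.exp (x - σ k * α) * σ k) := by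
    intro N
    apply Prod.ext
    · rw [Prod.fst_sum]
      apply Finset.sum_congr rfl
      intro k _
      simp [Prod.smul_mk]
    · rw [Prod.snd_sum]
      apply Finset.sum_congr rfl
      intro k _
      simp [Prod.smul_mk, mul_comm]
  simp only [heq]
  exact htA.prodMk_nhds htB

end Part5



section Subd
variable {p σ : ℕ → ℝ} {α : ℝ}

lemma slope_exp_tendsto : Tendsto (fun t : ℝ => (Real.exp t - 1) / t)
    (nhdsWithin 0 {(0:ℝ)}ᶜ) (nhds 1) := by
  have hd : HasDerivAt Real.exp 1 0 := by simpa using Real.hasDerivAt_exp 0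
  have h := hasDerivAt_iff_tendsto_slope.1 hd
  apply h.congr'
  filter_upwards [self_mem_nhdsWithin] with t ht
  rw [slope_def_field]
  simp [Real.exp_zero]

lemma subd_eq (hp : ∀ n, 1 ≤ p n) (hσpos : ∀ n, 0 < σ n)
    (h1 : Set.Iio (-α) ⊆ fDom p σ) (h2 : fDom p σ ⊆ Set.Iic (-α))
    (hsA : Summable fun n => p n * Real.exp (σ n * (-α)))
    (hsB : Summable fun n => p n * σ n * Real.exp (σ n * (-α))) (x : ℝ) :
    subd2 (fun z => ((hMBe p σ z : ℝ≥0∞) : EReal)) (x, -α) =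
      {Real.exp x * fR p σ (-α)} ×ˢ Set.Ici (Real.exp x * fD p σ (-α)) := by
  have hval : ((hMBe p σ (x, -α) : ℝ≥0∞) : EReal)
      = ((Real.exp x * fR p σ (-α) : ℝ) : EReal) := hMBe_coe_eq hp (x, -α) hsA
  have hfRpos : 0 < fR p σ (-α) := fR_pos hp hsA
  ext w
  simp only [Set.mem_prod, Set.mem_singleton_iff, Set.mem_Ici]
  constructor
  · intro hw
    have hreal : ∀ x' y', y' ≤ -α →
        Real.exp x * fR p σ (-α) + (w.1 * (x' - x) + w.2 * (y' - (-α)))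
          ≤ Real.exp x' * fR p σ y' := by
      intro x' y' hy'
      have h := hw (x', y')
      dsimp only at h
      rw [hval, hMBe_coe_eq hp (x', y') (summable_a_of_lt hp hσpos hy' hsA),
        ← EReal.coe_add, EReal.coe_le_coe_iff] at h
      exact h
    constructor
    · -- w.1 = exp x * fR (-α)
      have hub : ∀ t : ℝ, w.1 * t ≤ (Real.exp x * fR p σ (-α)) * (Real.exp t - 1) := by
        intro t
        have h := hreal (x + t) (-α) le_rfl
        have hexp : Real.exp (x + t) = Real.exp x * Real.exp t := Real.exp_add x t
        nlinarith [h]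
      have hlim : Tendsto (fun t : ℝ => (Real.exp x * fR p σ (-α)) * ((Real.exp t - 1) / t))
          (nhdsWithin 0 {(0:ℝ)}ᶜ) (nhds (Real.exp x * fR p σ (-α))) := by
        have := slope_exp_tendsto.const_mul (Real.exp x * fR p σ (-α))
        simpa using this
      have hupper : w.1 ≤ Real.exp x * fR p σ (-α) := by
        apply ge_of_tendsto (hlim.mono_left
          (nhdsWithin_mono 0 (fun t (ht : t ∈ Set.Ioi (0:ℝ)) => ne_of_gt ht)))
        filter_upwards [self_mem_nhdsWithin] with t ht
        rw [Set.mem_Ioi] at ht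
        rw [mul_div_assoc', le_div_iff₀ ht]
        exact hub t
      have hlower : Real.exp x * fR p σ (-α) ≤ w.1 := by
        apply le_of_tendsto (hlim.mono_left
          (nhdsWithin_mono 0 (fun t (ht : t ∈ Set.Iio (0:ℝ)) => ne_of_lt ht)))
        filter_upwards [self_mem_nhdsWithin] with t ht
        rw [Set.mem_Iio] at ht
        rw [mul_div_assoc', div_le_iff_of_neg ht]
        exact hub t
      linarith
    · -- exp x * fD (-α) ≤ w.2
      have hstep : ∀ y', y' < -α → Real.exp x * fD p σ y' ≤ w.2 := by
        intro y' hy'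
        have h := hreal x y' hy'.le
        have hconv := conv_ineq hp hσpos h1 hsA hy'
        have hexp := (Real.exp_pos x).le
        have h3 : w.2 * (y' + α) ≤ (Real.exp x * fD p σ y') * (y' + α) := by
          nlinarith [mul_le_mul_of_nonneg_left hconv hexp]
        have hs : y' + α < 0 := by linarith
        by_contra hcon
        push_neg at hcon
        have := mul_lt_mul_of_neg_right hcon hs
        linarith
      have hlim : Tendsto (fun y' => Real.exp x * fD p σ y')
          (nhdsWithin (-α) (Set.Iio (-α))) (nhds (Real.exp x * fD p σ (-α))) :=
        (tendsto_fD_left hp hσpos h1 hsB).const_mul _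
      apply le_of_tendsto hlim
      filter_upwards [self_mem_nhdsWithin] with y' hy'
      exact hstep y' hy'
  · rintro ⟨hw1, hw2⟩
    intro z'
    rcases le_or_gt z'.2 (-α) with hz | hz
    · show ((hMBe p σ (x, -α) : ℝ≥0∞) : EReal) + _ ≤ ((hMBe p σ z' : ℝ≥0∞) : EReal)
      rw [hval, hMBe_coe_eq hp z' (summable_a_of_lt hp hσpos hz hsA),
        ← EReal.coe_add, EReal.coe_le_coe_iff]
      have hkey := key_ineq hp hσpos hsA hsB (z'.1 - x) hz
      have hw2' : w.2 * (z'.2 - (-α)) ≤ (Real.exp x * fD p σ (-α)) * (z'.2 + α) := by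
        have hc : z'.2 + α ≤ 0 := by linarith
        nlinarith
      have hexp : Real.exp z'.1 = Real.exp x * Real.exp (z'.1 - x) := by
        rw [← Real.exp_add]; ring_nf
      have hm := mul_le_mul_of_nonneg_left hkey (Real.exp_pos x).le
      rw [hw1]
      dsimp only
      rw [hexp]
      nlinarith [hm, hw2']
    · show ((hMBe p σ (x, -α) : ℝ≥0∞) : EReal) + _ ≤ ((hMBe p σ z' : ℝ≥0∞) : EReal)
      rw [hMBe_top hp h2 z' hz]
      simp only [EReal.coe_ennreal_top]
      exact le_top

end Subd


theorem stmt16 (p σ : ℕ → ℝ) (hp : ∀ n, 1 ≤ p n) (hσpos : ∀ n, 0 < σ n)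
    (hσtop : Tendsto σ atTop atTop) (hne : (fDom p σ).Nonempty)
    (α : ℝ) (hα : 0 ≤ α) (h1 : Set.Iio (-α) ⊆ fDom p σ) (h2 : fDom p σ ⊆ Set.Iic (-α))
    (θ₂ : EReal)
    (hθ₂ : Tendsto (fun y => ((fD p σ y / fR p σ y : ℝ) : EReal))
      (nhdsWithin (-α) (Set.Iio (-α))) (nhds θ₂)) :
    ((sInf (Set.range σ) : ℝ) : EReal) < θ₂ ∧
    (∀ x y : ℝ, y < -α →
      (Summable fun n => p n * Real.exp (x + σ n * y)) ∧
      (Summable fun n => p n * σ n * Real.exp (x + σ n * y)) ∧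
      HasFDerivAt (fun z : ℝ × ℝ => Real.exp z.1 * fR p σ z.2)
        (gradCLM (∑' n, p n * Real.exp (x + σ n * y))
          (∑' n, p n * σ n * Real.exp (x + σ n * y))) (x, y)) ∧
    ((fun z : ℝ × ℝ => ((∑' n, p n * Real.exp (z.1 + σ n * z.2)),
        (∑' n, p n * σ n * Real.exp (z.1 + σ n * z.2)))) '' (Set.univ ×ˢ Set.Iio (-α)) =
      {w : ℝ × ℝ | 0 < w.1 ∧ sInf (Set.range σ) * w.1 < w.2 ∧
        ((w.2 : ℝ) : EReal) < θ₂ * ((w.1 : ℝ) : EReal)}) ∧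
    (θ₂ < ⊤ ↔
      (-α ∈ fDom p σ ∧ Summable fun n => p n * σ n * Real.exp (σ n * (-α)))) ∧
    ((-α ∈ fDom p σ ∧ (Summable fun n => p n * σ n * Real.exp (σ n * (-α)))) →
      ∀ x : ℝ,
        Tendsto (fun N => ∑ k ∈ Finset.range N,
            (p k * Real.exp (x - σ k * α)) • ((1 : ℝ), σ k)) atTop
          (nhds (Real.exp x * fR p σ (-α), Real.exp x * fD p σ (-α))) ∧
        subd2 (fun z => ((hMBe p σ z : ℝ≥0∞) : EReal)) (x, -α) =
          {Real.exp x * fR p σ (-α)} ×ˢ Set.Ici (Real.exp x * fD p σ (-α))) := by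
  refine ⟨?_, ?_, ?_, ?_, ?_⟩
  · have hy : (-α - 1 : ℝ) < -α := by linarith
    have h₁ := theta1_lt_gg hp hσpos hσtop h1 hy
    have h₂ := gg_lt_theta2 hp hσpos hσtop h1 hθ₂ hy
    have hfRpos := fR_pos hp (sumA h1 hy)
    have h₃ : sInf (Set.range σ) < gg p σ (-α - 1) := by
      rw [gg, lt_div_iff₀ hfRpos]; linarith
    exact lt_trans (by exact_mod_cast h₃) h₂
  · intro x y hy
    refine ⟨sumA' hp h1 hy x, sumB' hp hσpos h1 hy x, ?_⟩
    rw [tsumA_eq, tsumB_eq]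
    exact hasFDerivAt_h hp hσpos h1 hy
  · exact image_grad hp hσpos hσtop h1 hθ₂
  · constructor
    · intro htop
      obtain ⟨hA, hB⟩ := summable_at_of_theta2_lt_top hp hσpos hσtop h1 hθ₂ htop
      exact ⟨hA, hB⟩
    · rintro ⟨hA, hB⟩
      exact theta2_lt_top_of_summable hp hσpos h1 hθ₂ hB
  · rintro ⟨hA, hB⟩ x
    have hA' : Summable fun n => p n * Real.exp (σ n * (-α)) := hA
    exact ⟨vector_tendsto hp hσpos hA' hB x, subd_eq hp hσpos h1 h2 hA' hB x⟩
end Deriv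
end
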